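/- arXiv:2409.07941 — 7 statements merged into one kernel-verified Lean document; each statement's English description precedes it below -/
import Mathlib

section
/- Let K be a real quadratic field, fix one of the two embeddings ι : K → ℝ, and let G(z₁,…,z_r) = G₀(z₁, τ(z₁), …, z_r, τ(z_r)) be a totally positive definite generalized quadratic form in r variables over K. Then there exists a real constant δ > 0 with the following property: whenever (z₁,…,z_r) ∈ O_K^r is such that some proper variable z_i takes a nonzero value, it holds that ι(G(z₁,…,z_r)) ≥ δ. -/
open NumberField
open Matrix

lemma bilin_expand {R ι : Type*} [CommRing R] [Fintype ι] [DecidableEq ι]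
    (B : ((ι → R) →ₗ[R] (ι → R) →ₗ[R] R)) (x y : ι → R) :
    B x y = ∑ p, ∑ q, x p * y q * B (Pi.single p 1) (Pi.single q 1) := by
  have hs : ∀ w : ι → R, w = ∑ p, w p • (Pi.single p 1 : ι → R) := by
    intro w; funext q
    simp [Finset.sum_apply, Pi.single_apply]
  conv_lhs => rw [hs x, hs y]
  simp only [map_sum, _root_.map_smul, LinearMap.coe_sum, Finset.sum_apply,
    LinearMap.smul_apply, smul_eq_mul, Finset.mul_sum]
  rw [Finset.sum_comm]
  refine Finset.sum_congr rfl fun p _ => Finset.sum_congr rfl fun q _ => by ring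

lemma quad_expand {ι : Type*} [Fintype ι] (A : ι → ι → ℝ) (hA : ∀ p q, A p q = A q p)
    (u w : ι → ℝ) (t : ℝ) :
    ∑ p, ∑ q, (u p + t * w p) * (u q + t * w q) * A p q
      = (∑ p, ∑ q, u p * u q * A p q) + t^2 * (∑ p, ∑ q, w p * w q * A p q)
        + 2*t* (∑ p, ∑ q, u p * w q * A p q) := by
  have h1 : ∀ p q : ι, (u p + t*w p)*(u q + t*w q)*A p q
      = u p*u q*A p q + t^2*(w p*w q*A p q) + t*(u p*w q*A p q) + t*(w p * u q * A p q) :=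
    fun p q => by ring
  simp_rw [h1, Finset.sum_add_distrib, ← Finset.mul_sum]
  have h2 : ∑ p, ∑ q, w p * u q * A p q = ∑ p, ∑ q, u p * w q * A p q := by
    rw [Finset.sum_comm]
    exact Finset.sum_congr rfl fun p _ => Finset.sum_congr rfl fun q _ => by rw [hA q p]; ring
  rw [h2]; ring

lemma card_two_aux {α : Type*} [Fintype α] (hcard : Fintype.card α = 2)
    {a b c : α} (hab : a ≠ b) (hca : c ≠ a) : c = b := by
  classical
  by_contra hcb
  have h3 : ({a, b, c} : Finset α).card = 3 := by
    rw [Finset.card_insert_of_notMem (by simp [hab, hca.symm]),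
      Finset.card_insert_of_notMem (by simp [Ne.symm hcb]), Finset.card_singleton]
  have h := Finset.card_le_univ ({a, b, c} : Finset α)
  rw [h3] at h
  rw [hcard] at h
  omega

lemma card_two_aux' {α : Type*} [Fintype α] [DecidableEq α] (hcard : Fintype.card α = 2)
    {a b : α} (hab : a ≠ b) : (Finset.univ : Finset α) = {a, b} := by
  classical
  symm
  apply Finset.eq_univ_of_card
  rw [Finset.card_insert_of_notMem (by simp [hab]), Finset.card_singleton, hcard]

lemma tau_embed {K : Type*} [Field K] [NumberField K]
    (hdeg : Module.finrank ℚ K = 2)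
    (φ₁ φ₂ : K →+* ℝ) (hφ : φ₁ ≠ φ₂)
    (τ : K ≃ₐ[ℚ] K) (hτ : τ ≠ AlgEquiv.refl) (x : K) : φ₁ (τ x) = φ₂ x := by
  have hcard : Fintype.card (K →+* ℂ) = 2 := by
    rw [NumberField.Embeddings.card K ℂ, hdeg]
  set ψ : K →+* ℝ := φ₁.comp τ.toAlgHom.toRingHom with hψ
  have hinj : Function.Injective
      (fun f : K →+* ℝ => Complex.ofRealHom.comp f) := by
    intro f g h
    ext y
    have := RingHom.congr_fun h y
    simpa using Complex.ofReal_injective (by simpa using this)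
  have hψφ₁ : ψ ≠ φ₁ := by
    intro h
    apply hτ
    ext y
    have := RingHom.congr_fun h y
    simp only [hψ, RingHom.comp_apply] at this
    exact φ₁.injective this
  have : Complex.ofRealHom.comp ψ = Complex.ofRealHom.comp φ₂ :=
    card_two_aux hcard (fun h => hφ (hinj h)) (fun h => hψφ₁ (hinj h))
  have := RingHom.congr_fun (hinj this) x
  simpa [hψ] using this

lemma norm_lower {K : Type*} [Field K] [NumberField K]
    (hdeg : Module.finrank ℚ K = 2)
    (φ₁ φ₂ : K →+* ℝ) (hφ : φ₁ ≠ φ₂)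
    (w : 𝓞 K) (hw : w ≠ 0) : 1 ≤ |φ₁ (w : K)| * |φ₂ (w : K)| := by
  classical
  have hcard : Fintype.card (K →ₐ[ℚ] ℂ) = 2 := by
    rw [AlgHom.card, hdeg]
  set a : K →ₐ[ℚ] ℂ := RingHom.equivRatAlgHom K ℂ (Complex.ofRealHom.comp φ₁) with ha
  set b : K →ₐ[ℚ] ℂ := RingHom.equivRatAlgHom K ℂ (Complex.ofRealHom.comp φ₂) with hb
  have hab : a ≠ b := by
    intro h
    apply hφ
    have := (RingHom.equivRatAlgHom K ℂ).injective h
    ext y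
    have := RingHom.congr_fun this y
    exact Complex.ofReal_injective (by simpa using this)
  have hprod : algebraMap ℚ ℂ (Algebra.norm ℚ (w : K)) = a (w : K) * b (w : K) := by
    rw [Algebra.norm_eq_prod_embeddings, card_two_aux' hcard hab, Finset.prod_pair hab]
  have hax : a (w : K) = Complex.ofReal (φ₁ (w : K)) := by
    rfl
  have hbx : b (w : K) = Complex.ofReal (φ₂ (w : K)) := by
    rfl
  set n : ℤ := Algebra.norm ℤ w with hn
  have hnq : (n : ℚ) = Algebra.norm ℚ (w : K) := Algebra.coe_norm_int w
  have hne : Algebra.norm ℚ (w : K) ≠ 0 := by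
    rw [Algebra.norm_ne_zero_iff]
    exact fun h => hw (by ext; simpa using h)
  have hn0 : n ≠ 0 := by
    intro h; apply hne; rw [← hnq, h]; simp
  have hn1 : 1 ≤ |n| := Int.one_le_abs (by omega)
  have habs := congr_arg (‖·‖) hprod
  rw [hax, hbx, norm_mul, Complex.norm_real, Complex.norm_real, Real.norm_eq_abs,
    Real.norm_eq_abs] at habs
  have : ‖(algebraMap ℚ ℂ (Algebra.norm ℚ (w : K)))‖ = |(n : ℝ)| := by
    rw [← hnq, eq_ratCast]
    push_cast
    simp
  rw [this] at habs
  rw [← habs]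
  have : (1 : ℝ) ≤ |(n : ℝ)| := by
    rw [← Int.cast_abs]
    exact_mod_cast hn1
  exact this

/-- **Lemma 3.3.** Let `K` be a real quadratic field (a totally real number field of degree 2,
presented via its two distinct real embeddings `φ₁ φ₂ : K →+* ℝ`, with `ι := φ₁` a fixed one of
them) with nontrivial automorphism `τ`.  A generalized quadratic form in `r` variables is given
by a quadratic form `G₀` in `2r` variables (indexed by `Fin r × Bool`, where `(i, false)`
receives `zᵢ` and `(i, true)` receives `τ(zᵢ)`), via
`G(z₁,…,z_r) = G₀(z₁, τ(z₁), …, z_r, τ(z_r))`.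
The set `S` of coordinates appearing in `G` is encoded by requiring that `G₀` depend only on
the coordinates in `S` (`hS`); a variable `zᵢ` is proper if both `(i, false)` and `(i, true)`
lie in `S`.  Total positive definiteness of `G` means that its associated quadratic form
(the restriction of `G₀` to the coordinates in `S`) is totally positive definite (`hdef`).
Then there is a real `δ > 0` such that whenever `(z₁,…,z_r) ∈ (𝓞 K)^r` has some proper
variable `zᵢ` taking a nonzero value, we get `ι(G(z₁,…,z_r)) ≥ δ`. -/
theorem genform_lower_bound
    (K : Type*) [Field K] [NumberField K]
    (hdeg : Module.finrank ℚ K = 2)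
    (φ₁ φ₂ : K →+* ℝ) (hφ : φ₁ ≠ φ₂)
    (τ : K ≃ₐ[ℚ] K) (hτ : τ ≠ AlgEquiv.refl)
    (r : ℕ) (G₀ : QuadraticForm K ((Fin r × Bool) → K))
    (S : Set (Fin r × Bool))
    (hS : ∀ x y : (Fin r × Bool) → K, (∀ p ∈ S, x p = y p) → G₀ x = G₀ y)
    (hdef : ∀ x : (Fin r × Bool) → K, (∀ p ∉ S, x p = 0) → x ≠ 0 →
      0 < φ₁ (G₀ x) ∧ 0 < φ₂ (G₀ x)) :
    ∃ δ : ℝ, 0 < δ ∧ ∀ z : Fin r → 𝓞 K,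
      (∃ i : Fin r, (i, false) ∈ S ∧ (i, true) ∈ S ∧ z i ≠ 0) →
      δ ≤ φ₁ (G₀ (fun p => if p.2 then τ (z p.1 : K) else (z p.1 : K))) := by
  classical
  by_cases hP : ∃ i : Fin r, (i, false) ∈ S ∧ (i, true) ∈ S
  swap
  · exact ⟨1, one_pos, fun z hz => absurd ⟨hz.choose, hz.choose_spec.1, hz.choose_spec.2.1⟩ hP⟩
  obtain ⟨i₀, hi₀f, hi₀t⟩ := hP
  letI : Invertible (2 : K) := invertibleOfNonzero two_ne_zero
  set B := QuadraticMap.associatedHom (R := K) (M := (Fin r × Bool) → K) (N := K) K G₀ with hB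
  have Bself : ∀ x, B x x = G₀ x := fun x => QuadraticMap.associated_eq_self_apply K G₀ x
  have Bsymm : ∀ x y, B x y = B y x := fun x y => by
    rw [hB, QuadraticMap.associated_apply, QuadraticMap.associated_apply, add_comm, sub_sub,
      sub_sub, add_comm (G₀ x) (G₀ y)]
  set M : Matrix (Fin r × Bool) (Fin r × Bool) K :=
    fun p q => B (Pi.single p 1) (Pi.single q 1) with hM
  set A : Matrix (Fin r × Bool) (Fin r × Bool) ℝ := fun p q => φ₁ (M p q) with hA
  have Asymm : ∀ p q, A p q = A q p := fun p q => by
    simp only [hA, hM]; exact congrArg φ₁ (Bsymm _ _)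
  set f : ((Fin r × Bool) → ℝ) → ℝ := fun v => ∑ p, ∑ q, v p * v q * A p q with hf
  have key : ∀ x : (Fin r × Bool) → K, φ₁ (G₀ x) = f (fun p => φ₁ (x p)) := by
    intro x
    rw [← Bself, bilin_expand]
    simp [hf, map_sum, _root_.map_mul, hA, hM]
  have fcont : Continuous f := by
    apply continuous_finset_sum
    intro p _
    apply continuous_finset_sum
    intro q _
    exact ((continuous_apply p).mul (continuous_apply q)).mul continuous_const
  set g : ((Fin r × Bool) → ℝ) → ((Fin r × Bool) → ℝ) → ℝ :=
    fun u w => ∑ p, ∑ q, u p * w q * A p q with hg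
  have hexp : ∀ (u w : (Fin r × Bool) → ℝ) (t : ℝ),
      f (u + t • w) = f u + t^2 * f w + 2*t*(g u w) := by
    intro u w t
    have h0 : f (u + t • w) = ∑ p, ∑ q, (u p + t * w p) * (u q + t * w q) * A p q := rfl
    rw [h0, quad_expand A Asymm u w t]
  have fzero : f 0 = 0 := by simp [hf]
  have gzero : ∀ w, g 0 w = 0 := fun w => by simp [hg]
  have fscale : ∀ (c : ℝ) (v : (Fin r × Bool) → ℝ), f (c • v) = c^2 * f v := by
    intro c v
    have := hexp 0 v c
    rw [zero_add, fzero, gzero, zero_add, mul_zero, add_zero] at this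
    exact this
  -- nonnegativity on V by density of rational points
  have fnonneg : ∀ v : (Fin r × Bool) → ℝ, (∀ p ∉ S, v p = 0) → 0 ≤ f v := by
    intro v hv
    have happrox : ∀ n : ℕ, ∀ p : Fin r × Bool, ∃ q : ℚ, |v p - q| < 1/(n+1) := by
      intro n p
      exact exists_rat_near (v p) (by positivity)
    choose qs hqs using happrox
    set y : ℕ → (Fin r × Bool) → ℚ := fun n p => if p ∈ S then qs n p else 0 with hy
    have hnonneg : ∀ n, 0 ≤ f (fun p => ((y n p : ℝ))) := by
      intro n
      set Y : (Fin r × Bool) → K := fun p => ((y n p : ℚ) : K) with hY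
      have h1 : (fun p => ((y n p : ℝ))) = fun p => φ₁ (Y p) := by
        funext p; simp [hY, map_ratCast]
      rw [h1, ← key]
      by_cases hY0 : Y = 0
      · rw [hY0]
        simp
      · exact le_of_lt (hdef Y (fun p hp => by simp [hY, hy, if_neg hp]) hY0).1
    have htend : Filter.Tendsto (fun n => (fun p => ((y n p : ℝ)))) Filter.atTop (nhds v) := by
      rw [tendsto_pi_nhds]
      intro p
      by_cases hp : p ∈ S
      · rw [tendsto_iff_dist_tendsto_zero]
        apply squeeze_zero (fun n => dist_nonneg)
          (g := fun n : ℕ => 1/((n:ℝ)+1))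
          (fun n => by
            rw [Real.dist_eq, abs_sub_comm]
            simpa [hy, if_pos hp] using (hqs n p).le)
        exact tendsto_one_div_add_atTop_nhds_zero_nat
      · simp only [hy, if_neg hp, hv p hp, Rat.cast_zero]
        exact tendsto_const_nhds
    exact ge_of_tendsto ((fcont.tendsto v).comp htend) (Filter.Eventually.of_forall hnonneg)
  clear_value B M A f g
  clear hB
  -- compactness: minimum on the unit sphere intersected with V
  set V : Set ((Fin r × Bool) → ℝ) := {v | ∀ p ∉ S, v p = 0} with hV
  have hVclosed : IsClosed V := by
    have hVeq : V = ⋂ (p : {p : Fin r × Bool // p ∉ S}),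
        {v : (Fin r × Bool) → ℝ | v p.1 = 0} := by
      ext v; simp [hV, Set.mem_iInter, Subtype.forall]
    rw [hVeq]
    exact isClosed_iInter fun p => isClosed_eq (continuous_apply p.1) continuous_const
  have hsphere : IsCompact (Metric.sphere (0 : (Fin r × Bool) → ℝ) 1 ∩ V) :=
    (isCompact_sphere 0 1).inter_right hVclosed
  have hne : (Metric.sphere (0 : (Fin r × Bool) → ℝ) 1 ∩ V).Nonempty := by
    refine ⟨Pi.single (i₀, false) 1, ?_, ?_⟩
    · rw [mem_sphere_zero_iff_norm, Pi.norm_single, norm_one]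
    · intro p hp
      have hne' : p ≠ (i₀, false) := fun h => hp (h ▸ hi₀f)
      simp [Pi.single_apply, hne']
  obtain ⟨v₀, hv₀mem, hv₀min⟩ := hsphere.exists_isMinOn hne fcont.continuousOn
  have hv₀V : v₀ ∈ V := hv₀mem.2
  have hv₀norm : ‖v₀‖ = 1 := mem_sphere_zero_iff_norm.mp hv₀mem.1
  -- the minimum is positive
  have hfv₀ : 0 < f v₀ := by
    rcases (fnonneg v₀ hv₀V).lt_or_eq with hlt | heq
    · exact hlt
    exfalso
    have hcross : ∀ w ∈ V, g v₀ w = 0 := by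
      intro w hw
      have hd : 0 ≤ f w := fnonneg w hw
      have hmem : ∀ t : ℝ, (v₀ + t • w) ∈ V := fun t p hp => by
        simp [hv₀V p hp, hw p hp]
      obtain ⟨c, hc⟩ : ∃ c, g v₀ w = c := ⟨_, rfl⟩
      obtain ⟨d, hdd⟩ : ∃ d, f w = d := ⟨_, rfl⟩
      rw [hc]
      rw [hdd] at hd
      have ht := fnonneg _ (hmem (-c/(d + 1)))
      rw [hexp, ← heq, zero_add, hc, hdd] at ht
      have hd1 : (0:ℝ) < d + 1 := by linarith
      have h4 := mul_le_mul_of_nonneg_left ht (le_of_lt (mul_pos hd1 hd1))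
      rw [mul_zero] at h4
      have h5 : (d+1)*(d+1) * ((-c/(d+1))^2 * d + 2 * (-c/(d+1)) * c)
          = c^2 * d - 2 * c^2 * (d+1) := by
        field_simp
        ring
      rw [h5] at h4
      nlinarith [sq_nonneg c]
    have hrow : ∀ q' ∈ S, ∑ p, v₀ p * A p q' = 0 := by
      intro q' hq'
      have hw : (Pi.single q' (1:ℝ)) ∈ V := fun p hp => by
        have hne' : p ≠ q' := fun h => hp (h ▸ hq')
        simp [Pi.single_apply, hne']
      have hc := hcross _ hw
      rw [hg] at hc
      simpa [Pi.single_apply, mul_ite, ite_mul, Finset.sum_ite_eq'] using hc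
    haveI : Fintype {p : Fin r × Bool // p ∈ S} := Fintype.ofFinite _
    set A' : Matrix {p : Fin r × Bool // p ∈ S} {p : Fin r × Bool // p ∈ S} ℝ :=
      fun a b => A a.1 b.1 with hA'
    set v' : {p : Fin r × Bool // p ∈ S} → ℝ := fun a => v₀ a.1 with hv'
    have hvne : v₀ ≠ 0 := by
      intro h
      rw [h, norm_zero] at hv₀norm
      exact one_ne_zero hv₀norm.symm
    have hv'0 : v' ≠ 0 := by
      obtain ⟨p, hp⟩ := Function.ne_iff.mp hvne
      have hpS : p ∈ S := by
        by_contra hns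
        exact hp (hv₀V p hns)
      intro h
      exact hp (by simpa [hv'] using congr_fun h ⟨p, hpS⟩)
    have hker : A' *ᵥ v' = 0 := by
      funext a
      have ha := hrow a.1 a.2
      show ∑ b, A' a b * v' b = 0
      have e1 : ∑ b : {p : Fin r × Bool // p ∈ S}, A a.1 b.1 * v₀ b.1
          = ∑ p ∈ S.toFinset, A a.1 p * v₀ p :=
        Finset.sum_set_coe (f := fun p => A a.1 p * v₀ p) S
      have e2 : ∑ p ∈ S.toFinset, A a.1 p * v₀ p = ∑ p, A a.1 p * v₀ p := by
        apply Finset.sum_subset (Finset.subset_univ _)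
        intro p _ hp
        rw [hv₀V p (by simpa using hp), mul_zero]
      have e3 : ∑ p, A a.1 p * v₀ p = 0 := by
        calc ∑ p, A a.1 p * v₀ p = ∑ p, v₀ p * A p a.1 :=
              Finset.sum_congr rfl fun p _ => by rw [Asymm a.1 p]; ring
          _ = 0 := ha
      calc ∑ b, A' a b * v' b = ∑ b : {p : Fin r × Bool // p ∈ S}, A a.1 b.1 * v₀ b.1 := rfl
        _ = 0 := by rw [e1, e2, e3]
    have hdetA : A'.det = 0 := Matrix.exists_mulVec_eq_zero_iff.mp ⟨v', hv'0, hker⟩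
    set M' : Matrix {p : Fin r × Bool // p ∈ S} {p : Fin r × Bool // p ∈ S} K :=
      fun a b => M a.1 b.1 with hM'
    have hmap : M'.map φ₁ = A' := by
      ext a b
      rw [hA', hA]
      rfl
    have hdetM : M'.det = 0 := by
      apply φ₁.injective
      rw [RingHom.map_det, RingHom.mapMatrix_apply, hmap, hdetA, map_zero]
    obtain ⟨y, hy0, hMy⟩ := Matrix.exists_mulVec_eq_zero_iff.mpr hdetM
    set yt : (Fin r × Bool) → K := fun p => if h : p ∈ S then y ⟨p, h⟩ else 0 with hyt
    have hytsupp : ∀ p ∉ S, yt p = 0 := fun p hp => dif_neg hp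
    have hytne : yt ≠ 0 := by
      obtain ⟨a, ha⟩ := Function.ne_iff.mp hy0
      intro h
      apply ha
      have := congr_fun h a.1
      simpa [hyt, dif_pos a.2] using this
    have hG0 : G₀ yt = 0 := by
      rw [← Bself, bilin_expand]
      apply Finset.sum_eq_zero
      intro p _
      by_cases hp : p ∈ S
      · have inner : ∑ q, yt q * M p q = 0 := by
          have e1 : ∑ q, yt q * M p q = ∑ q ∈ S.toFinset, yt q * M p q := by
            symm
            apply Finset.sum_subset (Finset.subset_univ _)
            intro q _ hq
            rw [hytsupp q (by simpa using hq), zero_mul]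
          have e2 : ∑ q ∈ S.toFinset, yt q * M p q
              = ∑ b : {p : Fin r × Bool // p ∈ S}, yt b.1 * M p b.1 :=
            (Finset.sum_set_coe (f := fun q => yt q * M p q) S).symm
          have e3 : ∑ b : {p : Fin r × Bool // p ∈ S}, yt b.1 * M p b.1
              = ∑ b : {p : Fin r × Bool // p ∈ S}, M' ⟨p, hp⟩ b * y b := by
            apply Finset.sum_congr rfl
            intro b _
            rw [show yt (b : Fin r × Bool) = y b from dif_pos b.2, hM']
            ring
          have e4 : ∑ b : {p : Fin r × Bool // p ∈ S}, M' ⟨p, hp⟩ b * y b = 0 := by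
            have := congr_fun hMy ⟨p, hp⟩
            simpa [Matrix.mulVec, dotProduct] using this
          rw [e1, e2, e3, e4]
        calc ∑ q, yt p * yt q * (B (Pi.single p 1)) (Pi.single q 1)
            = yt p * ∑ q, yt q * M p q := by
              rw [Finset.mul_sum]
              exact Finset.sum_congr rfl fun q _ => by rw [hM]; ring
          _ = 0 := by rw [inner, mul_zero]
      · apply Finset.sum_eq_zero
        intro q _
        rw [hytsupp p hp, zero_mul, zero_mul]
    have := (hdef yt hytsupp hytne).1
    rw [hG0, map_zero] at this
    exact lt_irrefl 0 this
  -- conclusion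
  refine ⟨f v₀, hfv₀, ?_⟩
  intro z hz
  obtain ⟨i, hif, hit, hzi⟩ := hz
  set x : (Fin r × Bool) → K := fun p => if p.2 then τ (z p.1 : K) else (z p.1 : K) with hx
  set x' : (Fin r × Bool) → K := fun p => if p ∈ S then x p else 0 with hx'
  have hGeq : G₀ x = G₀ x' := hS x x' (fun p hp => by rw [hx']; simp [if_pos hp])
  set v : (Fin r × Bool) → ℝ := fun p => φ₁ (x' p) with hv
  have hkey : φ₁ (G₀ x) = f v := by
    rw [hGeq, key]
  have hvV : v ∈ V := fun p hp => by simp [hv, hx', if_neg hp]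
  have hv1 : v (i, false) = φ₁ (z i : K) := by
    simp [hv, hx', if_pos hif, hx]
  have hv2 : v (i, true) = φ₁ (τ (z i : K)) := by
    simp [hv, hx', if_pos hit, hx]
  have hnorm1 : 1 ≤ ‖v‖ := by
    have h1 : 1 ≤ |φ₁ (z i : K)| * |φ₂ (z i : K)| := norm_lower hdeg φ₁ φ₂ hφ (z i) hzi
    have h2 : φ₂ ((z i : K)) = φ₁ (τ (z i : K)) := (tau_embed hdeg φ₁ φ₂ hφ τ hτ _).symm
    have hb1 : |v (i, false)| ≤ ‖v‖ := by
      simpa [Real.norm_eq_abs] using norm_le_pi_norm v (i, false)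
    have hb2 : |v (i, true)| ≤ ‖v‖ := by
      simpa [Real.norm_eq_abs] using norm_le_pi_norm v (i, true)
    rw [h2, ← hv1, ← hv2] at h1
    nlinarith [abs_nonneg (v (i, false)), abs_nonneg (v (i, true)), norm_nonneg v,
      mul_le_mul hb1 hb2 (abs_nonneg _) (norm_nonneg v)]
  have hvne0 : ‖v‖ ≠ 0 := by linarith
  set u : (Fin r × Bool) → ℝ := ‖v‖⁻¹ • v with hu
  have hu_sphere : u ∈ Metric.sphere (0 : (Fin r × Bool) → ℝ) 1 := by
    rw [mem_sphere_zero_iff_norm, hu, norm_smul, norm_inv, norm_norm, inv_mul_cancel₀ hvne0]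
  have huV : u ∈ V := fun p hp => by
    have := hvV p hp
    simp [hu, this]
  have hmin : f v₀ ≤ f u := isMinOn_iff.mp hv₀min u ⟨hu_sphere, huV⟩
  have hscale : f v = ‖v‖^2 * f u := by
    have hveq : v = ‖v‖ • u := by
      rw [hu, smul_smul, mul_inv_cancel₀ hvne0, one_smul]
    conv_lhs => rw [hveq]
    rw [fscale]
  have hsq : 1 ≤ ‖v‖^2 := by nlinarith
  have hfu : 0 ≤ f u := le_trans hfv₀.le hmin
  rw [hkey, hscale]
  calc f v₀ ≤ f u := hmin
    _ = 1 * f u := (one_mul _).symm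
    _ ≤ ‖v‖^2 * f u := mul_le_mul_of_nonneg_right hsq hfu
end

section
/- Let K be a real quadratic field and let G(z₁,…,z_r) = G₀(z₁, τ(z₁), …, z_r, τ(z_r)) be a totally positive definite integral generalized quadratic form in r variables over K. If G is universal, then G has a universal quadratic subform; more precisely, if z₁,…,z_ℓ are the non-proper variables of G and z_{ℓ+1},…,z_r the proper ones, then the quadratic form Q̃(z₁,…,z_ℓ) := G(z₁,…,z_ℓ, 0,…,0), obtained by setting all proper variables of G to zero, is universal. -/
open NumberField


lemma aux_embpair {K : Type*} [Field K] [NumberField K]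
    (hdeg : Module.finrank ℚ K = 2) {ψ₁ ψ₂ : K →+* ℂ} (h12 : ψ₁ ≠ ψ₂)
    (σ : K →+* ℂ) : σ = ψ₁ ∨ σ = ψ₂ := by
  classical
  have hcard : Fintype.card (K →+* ℂ) = 2 := by
    rw [NumberField.Embeddings.card K ℂ, hdeg]
  have huniv : ({ψ₁, ψ₂} : Finset (K →+* ℂ)) = Finset.univ := by
    apply Finset.eq_of_subset_of_card_le (Finset.subset_univ _)
    rw [Finset.card_univ, hcard, Finset.card_pair h12]
  have : σ ∈ ({ψ₁, ψ₂} : Finset (K →+* ℂ)) := by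
    rw [huniv]; exact Finset.mem_univ _
  simpa using this

lemma aux_norm {K : Type*} [Field K] [NumberField K]
    (hdeg : Module.finrank ℚ K = 2)
    {φ₁ φ₂ : K →+* ℝ} (hφ : φ₁ ≠ φ₂)
    {β : 𝓞 K} (hβ : β ≠ 0) :
    1 ≤ |φ₁ (β : K)| * |φ₂ (β : K)| := by
  classical
  set ψ₁ : K →+* ℂ := Complex.ofRealHom.comp φ₁ with hψ₁
  set ψ₂ : K →+* ℂ := Complex.ofRealHom.comp φ₂ with hψ₂
  have h12 : ψ₁ ≠ ψ₂ := by
    intro h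
    apply hφ
    ext x
    have := congrArg (fun f => (f : K →+* ℂ) x) h
    simpa [ψ₁, ψ₂, Complex.ofReal_inj] using this
  -- the norm as a rational number
  set N : ℚ := Algebra.norm ℚ (β : K) with hN
  have hprod : algebraMap ℚ ℂ N = ∏ σ : K →+* ℂ, σ (β : K) := by
    rw [hN, Algebra.norm_eq_prod_embeddings]
    exact Fintype.prod_equiv (RingHom.equivRatAlgHom K ℂ) (fun f => f (β:K))
      (fun a => a (β:K)) (fun f => rfl) |>.symm
  have hpair : (Finset.univ : Finset (K →+* ℂ)) = {ψ₁, ψ₂} := by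
    symm
    apply Finset.eq_of_subset_of_card_le (Finset.subset_univ _)
    rw [Finset.card_univ, NumberField.Embeddings.card K ℂ, hdeg, Finset.card_pair h12]
  have hprod2 : algebraMap ℚ ℂ N = ψ₁ (β : K) * ψ₂ (β : K) := by
    rw [hprod, hpair, Finset.prod_pair h12]
  -- N is a nonzero integer
  have hint : IsIntegral ℤ N := Algebra.isIntegral_norm (K := ℚ) (L := K)
    (NumberField.RingOfIntegers.isIntegral_coe β)
  obtain ⟨m, hm⟩ := IsIntegrallyClosed.isIntegral_iff.mp hint
  have hNne : N ≠ 0 := by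
    rw [hN]
    simp only [ne_eq, Algebra.norm_eq_zero_iff]
    exact fun h => hβ (by exact_mod_cast NumberField.RingOfIntegers.coe_eq_zero_iff.mp h)
  have hm0 : m ≠ 0 := by rintro rfl; simp at hm; exact hNne hm.symm
  have h1m : (1 : ℝ) ≤ |(m : ℝ)| := by
    have : (1 : ℤ) ≤ |m| := Int.one_le_abs hm0
    calc (1:ℝ) = ((1:ℤ) : ℝ) := by norm_num
    _ ≤ ((|m| : ℤ) : ℝ) := by exact_mod_cast this
    _ = |(m:ℝ)| := by push_cast; ring
  -- take absolute values in ℂ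
  have habs : |(m : ℝ)| = |φ₁ (β:K)| * |φ₂ (β:K)| := by
    have := congrArg (fun z : ℂ => ‖z‖) hprod2
    have hL : ‖(algebraMap ℚ ℂ N)‖ = |(m:ℝ)| := by
      rw [← hm]
      have : (algebraMap ℚ ℂ) ((algebraMap ℤ ℚ) m) = ((m:ℝ) : ℂ) := by
        push_cast; simp
      rw [this, Complex.norm_real, Real.norm_eq_abs]
    have hR : ‖(ψ₁ (β:K) * ψ₂ (β:K))‖ = |φ₁ (β:K)| * |φ₂ (β:K)| := by
      rw [norm_mul]
      simp [ψ₁, ψ₂, Complex.norm_real]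
    rw [hL, hR] at this
    exact this
  rw [← habs]; exact h1m

lemma aux_tau {K : Type*} [Field K] [NumberField K]
    (hdeg : Module.finrank ℚ K = 2)
    {φ₁ φ₂ : K →+* ℝ} (hφ : φ₁ ≠ φ₂)
    {τ : K ≃ₐ[ℚ] K} (hτ : τ ≠ AlgEquiv.refl) :
    ∀ x : K, φ₁ (τ x) = φ₂ x := by
  set ψ₁ : K →+* ℂ := Complex.ofRealHom.comp φ₁ with hψ₁
  set ψ₂ : K →+* ℂ := Complex.ofRealHom.comp φ₂ with hψ₂
  have h12 : ψ₁ ≠ ψ₂ := by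
    intro h
    apply hφ
    ext x
    have := congrArg (fun f => (f : K →+* ℂ) x) h
    simpa [ψ₁, ψ₂, Complex.ofReal_inj] using this
  set σ : K →+* ℂ := ψ₁.comp (τ : K →+* K) with hσ
  rcases aux_embpair hdeg h12 σ with h | h
  · exfalso
    apply hτ
    ext x
    have hx := congrArg (fun f => (f : K →+* ℂ) x) h
    simp only [σ, ψ₁, RingHom.comp_apply, Complex.ofRealHom_eq_coe, Complex.ofReal_inj] at hx
    exact φ₁.injective hx
  · intro x
    have hx := congrArg (fun f => (f : K →+* ℂ) x) h
    simpa [σ, ψ₁, ψ₂, Complex.ofReal_inj] using hx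


lemma aux_unit {K : Type*} [Field K] [NumberField K]
    {φ₁ φ₂ : K →+* ℝ} (hφ : φ₁ ≠ φ₂) :
    ∃ ε : (𝓞 K)ˣ, 0 < φ₁ ((ε : 𝓞 K) : K) ∧ φ₁ ((ε : 𝓞 K) : K) < 1 ∧
      0 < φ₂ ((ε : 𝓞 K) : K) := by
  classical
  set ψ₁ : K →+* ℂ := Complex.ofRealHom.comp φ₁ with hψ₁
  set ψ₂ : K →+* ℂ := Complex.ofRealHom.comp φ₂ with hψ₂
  have h12 : ψ₁ ≠ ψ₂ := by
    intro h
    apply hφ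
    ext x
    have := congrArg (fun f => (f : K →+* ℂ) x) h
    simpa [ψ₁, ψ₂, Complex.ofReal_inj] using this
  set w₁ : InfinitePlace K := InfinitePlace.mk ψ₁ with hw₁
  set w₂ : InfinitePlace K := InfinitePlace.mk ψ₂ with hw₂
  have hwne : w₁ ≠ w₂ := by
    intro h
    rcases InfinitePlace.mk_eq_iff.mp h with h' | h'
    · exact h12 h'
    · apply h12
      rw [← h']
      ext x
      simp [NumberField.ComplexEmbedding.conjugate, ψ₁, Complex.conj_ofReal]
  obtain ⟨u, hu⟩ := NumberField.Units.dirichletUnitTheorem.exists_unit K w₂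
  have hlog := hu w₁ hwne
  have hupos : 0 < w₁ ((u : 𝓞 K) : K) := by
    apply InfinitePlace.pos_iff.mpr
    exact_mod_cast u.ne_zero
  have hu1 : w₁ ((u : 𝓞 K) : K) < 1 := by
    by_contra hge
    push_neg at hge
    exact absurd (Real.log_nonneg hge) (not_le.mpr hlog)
  have hww : w₁ ((u : 𝓞 K) : K) = |φ₁ ((u : 𝓞 K) : K)| := by
    rw [hw₁, InfinitePlace.apply]
    simp [ψ₁, Complex.norm_real]
  have hune : ((u : 𝓞 K) : K) ≠ 0 := by exact_mod_cast u.ne_zero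
  have h1ne : φ₁ ((u : 𝓞 K) : K) ≠ 0 := by
    intro h
    rw [hww, h] at hupos; simp at hupos
  have h2ne : φ₂ ((u : 𝓞 K) : K) ≠ 0 := (map_ne_zero φ₂).mpr hune
  have habs1 : |φ₁ ((u : 𝓞 K) : K)| < 1 := by rw [← hww]; exact hu1
  have hval : (((u * u : (𝓞 K)ˣ) : 𝓞 K) : K) = ((u : 𝓞 K) : K) * ((u : 𝓞 K) : K) := by
    push_cast; ring
  refine ⟨u * u, ?_, ?_, ?_⟩
  · rw [hval, map_mul]
    exact mul_self_pos.mpr h1ne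
  · rw [hval, map_mul]
    have : φ₁ ((u : 𝓞 K) : K) * φ₁ ((u : 𝓞 K) : K)
        = |φ₁ ((u : 𝓞 K) : K)| * |φ₁ ((u : 𝓞 K) : K)| := (abs_mul_abs_self _).symm
    rw [this]
    nlinarith [abs_nonneg (φ₁ ((u : 𝓞 K) : K))]
  · rw [hval, map_mul]
    exact mul_self_pos.mpr h2ne


set_option maxHeartbeats 1600000 in
lemma aux_bound {K : Type*} [Field K] [NumberField K] (φ₁ : K →+* ℝ)
    {ι : Type*} [Fintype ι] [DecidableEq ι]
    (Q : QuadraticForm K (ι → K)) (S : Set ι)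
    (hdef : ∀ x : ι → K, (∀ p ∉ S, x p = 0) → x ≠ 0 → 0 < φ₁ (Q x)) :
    ∃ c > 0, ∀ x : ι → K, (∀ p ∉ S, x p = 0) → ∀ p : ι,
      c * (φ₁ (x p))^2 ≤ φ₁ (Q x) := by
  classical
  haveI : Invertible (2 : K) := invertibleOfNonzero two_ne_zero
  set B := QuadraticMap.associated (R := K) Q with hB
  have hBQ : ∀ x, B x x = Q x := by
    intro x
    have h := QuadraticMap.toQuadraticMap_associated K Q
    calc B x x = (QuadraticMap.associatedHom K Q).toQuadraticMap x := rfl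
    _ = Q x := by rw [h]
  -- standard basis vectors
  set e : ι → (ι → K) := fun p => fun j => if p = j then (1:K) else 0 with he
  have hsym : ∀ p q, B (e p) (e q) = B (e q) (e p) := by
    intro p q
    rw [hB, QuadraticMap.associated_apply, QuadraticMap.associated_apply,
      add_comm (e p) (e q), sub_right_comm]
  have hexp : ∀ x y : ι → K, B x y = ∑ p, ∑ q, x p * y q * B (e p) (e q) := by
    intro x y
    calc B x y = B (∑ p, x p • e p) (∑ q, y q • e q) := by
          rw [← pi_eq_sum_univ x, ← pi_eq_sum_univ y]
    _ = ∑ q, ∑ p, x p * y q * B (e p) (e q) := by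
          rw [map_sum]
          apply Finset.sum_congr rfl
          intro q _
          rw [map_sum B, LinearMap.sum_apply]
          apply Finset.sum_congr rfl
          intro p _
          rw [map_smul, map_smul B, LinearMap.smul_apply, smul_eq_mul, smul_eq_mul]
          ring
    _ = ∑ p, ∑ q, x p * y q * B (e p) (e q) := Finset.sum_comm
  -- the augmented Gram matrix over K
  set N : Matrix ι ι K := Matrix.of (fun p q =>
    if p ∈ S ∧ q ∈ S then B (e p) (e q) else if p = q then 1 else 0) with hNdef
  -- masking
  set mx : (ι → K) → (ι → K) := fun x p => if p ∈ S then x p else 0 with hmx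
  have hmx_supp : ∀ x, ∀ p ∉ S, mx x p = 0 := by
    intro x p hp; simp [hmx, hp]
  have hsplit : ∀ x : ι → K,
      ∑ p, ∑ q, x p * x q * N p q
        = B (mx x) (mx x) + ∑ p, (if p ∈ S then 0 else x p * x p) := by
    intro x
    rw [hexp]
    rw [← Finset.sum_add_distrib]
    apply Finset.sum_congr rfl
    intro p _
    have hinner : ∀ q, x p * x q * N p q
        = mx x p * mx x q * B (e p) (e q) + (if p = q ∧ p ∉ S then x p * x q else 0) := by
      intro q
      by_cases hp : p ∈ S <;> by_cases hq : q ∈ S <;> by_cases hpq : p = q <;>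
        simp [hNdef, hmx, hp, hq, hpq] <;> first | ring | (subst hpq; simp_all)
    rw [Finset.sum_congr rfl (fun q _ => hinner q), Finset.sum_add_distrib]
    congr 1
    rw [Finset.sum_congr rfl (fun q _ => ite_and (p = q) (p ∉ S) (x p * x q) 0),
      Finset.sum_ite_eq Finset.univ p (fun q => if p ∉ S then x p * x q else 0)]
    simp only [Finset.mem_univ, if_true]
    by_cases hp : p ∈ S <;> simp [hp]
  -- quadratic values of N are nonnegative under φ₁
  have hNval : ∀ x : ι → K,
      0 ≤ φ₁ (∑ p, ∑ q, x p * x q * N p q) ∧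
      (φ₁ (∑ p, ∑ q, x p * x q * N p q) = 0 → x = 0) := by
    intro x
    rw [hsplit x, map_add]
    have h1 : 0 ≤ φ₁ (B (mx x) (mx x)) := by
      by_cases hz : mx x = 0
      · rw [hz]; simp
      · exact le_of_lt (by rw [hBQ]; exact hdef (mx x) (hmx_supp x) hz)
    have h2 : φ₁ (∑ p, (if p ∈ S then 0 else x p * x p))
        = ∑ p, (if p ∈ S then 0 else (φ₁ (x p))^2) := by
      rw [map_sum]
      apply Finset.sum_congr rfl
      intro p _
      by_cases hp : p ∈ S <;> simp [hp, map_mul, sq]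
    have h2' : 0 ≤ ∑ p, (if p ∈ S then 0 else (φ₁ (x p))^2) :=
      Finset.sum_nonneg (fun p _ => by by_cases hp : p ∈ S <;> simp [hp, sq_nonneg])
    constructor
    · rw [h2]; positivity
    · intro h0
      rw [h2] at h0
      have hB0 : φ₁ (B (mx x) (mx x)) = 0 := by linarith
      have hS0 : ∑ p, (if p ∈ S then 0 else (φ₁ (x p))^2) = 0 := by linarith
      have hmx0 : mx x = 0 := by
        by_contra hz
        have := hdef (mx x) (hmx_supp x) hz
        rw [← hBQ] at this
        linarith
      funext p
      by_cases hp : p ∈ S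
      · have := congrFun hmx0 p
        simpa [hmx, hp] using this
      · have := (Finset.sum_eq_zero_iff_of_nonneg
          (fun q _ => by by_cases hq : q ∈ S <;> simp [hq, sq_nonneg])).mp hS0 p
          (Finset.mem_univ p)
        simp only [hp, if_false] at this
        have : φ₁ (x p) = 0 := by
          have := sq_eq_zero_iff.mp this
          exact this
        exact (map_eq_zero φ₁).mp this
  -- the real matrix and real quadratic function
  set A : Matrix ι ι ℝ := N.map φ₁ with hA
  set f : (ι → ℝ) → ℝ := fun t => ∑ p, ∑ q, t p * t q * A p q with hf
  have hfphi : ∀ x : ι → K, φ₁ (∑ p, ∑ q, x p * x q * N p q) = f (fun p => φ₁ (x p)) := by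
    intro x
    rw [map_sum]
    apply Finset.sum_congr rfl
    intro p _
    rw [map_sum]
    apply Finset.sum_congr rfl
    intro q _
    rw [map_mul, map_mul, hA]
    simp [Matrix.map_apply]
  have hcont : Continuous f := by
    apply continuous_finset_sum
    intro p _
    apply continuous_finset_sum
    intro q _
    exact ((continuous_apply p).mul (continuous_apply q)).mul continuous_const
  -- nonnegativity of f via density of rational points
  have hf0 : ∀ t : ι → ℝ, 0 ≤ f t := by
    intro t
    have hD : Dense (Set.pi Set.univ (fun _ : ι => Set.range ((↑) : ℚ → ℝ))) :=
      dense_pi Set.univ (fun _ _ => Rat.denseRange_cast)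
    have hC : IsClosed {t : ι → ℝ | 0 ≤ f t} := isClosed_le continuous_const hcont
    have hDC : Set.pi Set.univ (fun _ : ι => Set.range ((↑) : ℚ → ℝ))
        ⊆ {t : ι → ℝ | 0 ≤ f t} := by
      intro t ht
      choose rq hrq using fun p => ht p (Set.mem_univ p)
      set x : ι → K := fun p => ((rq p : ℚ) : K) with hx
      have hφx : (fun p => φ₁ (x p)) = t := by
        funext p
        rw [hx]
        simp only [map_ratCast]
        exact hrq p
      have := (hNval x).1
      rw [hfphi, hφx] at this
      exact this
    have : closure (Set.pi Set.univ (fun _ : ι => Set.range ((↑) : ℚ → ℝ)))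
        ⊆ {t : ι → ℝ | 0 ≤ f t} := closure_minimal hDC hC
    exact this (by rw [hD.closure_eq]; trivial)
  -- positive definiteness of f
  have hfpos : ∀ t : ι → ℝ, t ≠ 0 → 0 < f t := by
    intro t htne
    rcases lt_or_eq_of_le (hf0 t) with h | h
    · exact h
    exfalso
    -- f t = 0 ; derive A *ᵥ t = 0
    have hft : f t = 0 := h.symm
    have hfdot : ∀ s : ι → ℝ, f s = dotProduct s (A.mulVec s) := by
      intro s
      simp only [hf, dotProduct, Matrix.mulVec, Finset.mul_sum]
      apply Finset.sum_congr rfl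
      intro p _
      apply Finset.sum_congr rfl
      intro q _
      ring
    have hherm : A.IsHermitian := by
      rw [Matrix.IsHermitian]
      ext p q
      simp only [Matrix.conjTranspose_apply, star_trivial]
      rw [hA]
      simp only [Matrix.map_apply]
      congr 1
      rw [hNdef]
      simp only [Matrix.of_apply]
      by_cases hp : p ∈ S <;> by_cases hq : q ∈ S <;>
        simp [hp, hq, hsym p q, eq_comm]
    have hpsd : A.PosSemidef := by
      refine Matrix.PosSemidef.of_dotProduct_mulVec_nonneg hherm (fun s => ?_)
      rw [star_trivial]
      rw [← hfdot s]
      exact hf0 s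
    have hAt : A.mulVec t = 0 := by
      apply (hpsd.dotProduct_mulVec_zero_iff t).mp
      rw [star_trivial, ← hfdot t, hft]
    have hdetA : A.det = 0 := by
      rw [← Matrix.exists_mulVec_eq_zero_iff]
      exact ⟨t, htne, hAt⟩
    have hdetN : N.det = 0 := by
      have : φ₁ N.det = A.det := (RingHom.map_det φ₁ N).trans (by rw [hA, RingHom.mapMatrix_apply])
      rw [hdetA] at this
      exact (map_eq_zero φ₁).mp this
    obtain ⟨v, hv0, hNv⟩ := Matrix.exists_mulVec_eq_zero_iff.mpr hdetN
    have hvdot : ∑ p, ∑ q, v p * v q * N p q = 0 := by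
      have hvN : dotProduct v (N.mulVec v) = 0 := by rw [hNv]; simp
      rw [← hvN]
      simp only [dotProduct, Matrix.mulVec, Finset.mul_sum]
      apply Finset.sum_congr rfl
      intro p _
      apply Finset.sum_congr rfl
      intro q _
      ring
    have := (hNval v).2 (by rw [hvdot]; simp)
    exact hv0 this
  -- scaling property
  have hscale : ∀ (a : ℝ) (t : ι → ℝ), f (a • t) = a^2 * f t := by
    intro a t
    rw [hf]
    simp only [Pi.smul_apply, smul_eq_mul, Finset.mul_sum]
    apply Finset.sum_congr rfl
    intro p _
    apply Finset.sum_congr rfl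
    intro q _
    ring
  -- uniform lower bound on f
  have hbound : ∃ c > 0, ∀ t : ι → ℝ, c * ‖t‖^2 ≤ f t := by
    rcases isEmpty_or_nonempty ι with hι | hι
    · refine ⟨1, one_pos, fun t => ?_⟩
      have ht : t = 0 := Subsingleton.elim t 0
      subst ht
      simp [hf]
    · have hne : (Metric.sphere (0 : ι → ℝ) 1).Nonempty := by
        refine ⟨fun _ => 1, ?_⟩
        simp only [Metric.mem_sphere, dist_zero_right]
        rw [Pi.norm_def]
        simp only [nnnorm_one]
        rw [Finset.sup_const Finset.univ_nonempty 1]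
        simp
      obtain ⟨t₀, ht₀mem, hmin⟩ := (isCompact_sphere (0 : ι → ℝ) 1).exists_isMinOn hne
        hcont.continuousOn
      have ht₀norm : ‖t₀‖ = 1 := by simpa [dist_zero_right] using ht₀mem
      have ht₀ne : t₀ ≠ 0 := by
        intro h; rw [h] at ht₀norm; simp at ht₀norm
      refine ⟨f t₀, hfpos t₀ ht₀ne, fun t => ?_⟩
      rcases eq_or_ne t 0 with rfl | htne
      · simp [hf]
      · have hnt : ‖t‖ ≠ 0 := norm_ne_zero_iff.mpr htne
        set u : ι → ℝ := ‖t‖⁻¹ • t with hu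
        have humem : u ∈ Metric.sphere (0 : ι → ℝ) 1 := by
          simp [Metric.mem_sphere, dist_zero_right, hu, norm_smul, abs_of_nonneg,
            inv_mul_cancel₀ hnt, abs_inv, abs_of_nonneg (norm_nonneg t)]
        have htu : t = ‖t‖ • u := by
          rw [hu, smul_smul, mul_inv_cancel₀ hnt, one_smul]
        have : f t₀ ≤ f u := hmin humem
        calc f t₀ * ‖t‖^2 ≤ f u * ‖t‖^2 := by nlinarith [sq_nonneg ‖t‖]
        _ = ‖t‖^2 * f u := by ring
        _ = f (‖t‖ • u) := (hscale _ _).symm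
        _ = f t := by rw [← htu]
  obtain ⟨c, hc, hcb⟩ := hbound
  refine ⟨c, hc, fun x hxsupp p => ?_⟩
  have hmxx : mx x = x := by
    funext q
    by_cases hq : q ∈ S
    · simp [hmx, hq]
    · simp [hmx, hq, hxsupp q hq]
  have hQsum : ∑ p, ∑ q, x p * x q * N p q = Q x := by
    rw [hsplit x, hmxx, hBQ]
    have hdiag : ∑ p, (if p ∈ S then 0 else x p * x p) = 0 :=
      Finset.sum_eq_zero fun q _ => by
        by_cases hq : q ∈ S
        · simp [hq]
        · simp [hq, hxsupp q hq]
    rw [hdiag, add_zero]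
  have hQx : φ₁ (Q x) = f (fun p => φ₁ (x p)) := by
    rw [← hQsum, hfphi]
  set tx : ι → ℝ := fun p => φ₁ (x p) with htx
  have h1 : c * ‖tx‖^2 ≤ f tx := hcb tx
  have h2 : (φ₁ (x p))^2 ≤ ‖tx‖^2 := by
    have := norm_le_pi_norm tx p
    have habs : |φ₁ (x p)| ≤ ‖tx‖ := by
      simpa [htx, Real.norm_eq_abs] using this
    calc (φ₁ (x p))^2 = |φ₁ (x p)|^2 := (sq_abs _).symm
    _ ≤ ‖tx‖^2 := pow_le_pow_left₀ (abs_nonneg _) habs 2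
  calc c * (φ₁ (x p))^2 ≤ c * ‖tx‖^2 := by nlinarith
  _ ≤ f tx := h1
  _ = φ₁ (Q x) := hQx.symm

set_option maxHeartbeats 1600000 in
/-- **Main Theorem (Theorem 3.4).** Let `K` be a real quadratic field (a totally real number
field of degree 2, presented via its two distinct real embeddings `φ₁ φ₂ : K →+* ℝ`) with
nontrivial automorphism `τ`.  A generalized quadratic form in `r` variables is given by a
quadratic form `G₀` in `2r` variables (indexed by `Fin r × Bool`, where `(i, false)` receives
`zᵢ` and `(i, true)` receives `τ(zᵢ)`), via `G(z₁,…,z_r) = G₀(z₁, τ(z₁), …, z_r, τ(z_r))`.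
The set `S` of coordinates appearing in `G` is encoded by requiring that `G₀` depend only on
the coordinates in `S` (`hS`); a variable `zᵢ` is proper if both `(i, false)` and `(i, true)`
lie in `S`.  `G` is integral (`hint`: it takes integral values on integral arguments, which for
a quadratic form is equivalent to integrality of its coefficients) and totally positive
definite, meaning its associated quadratic form (the restriction of `G₀` to the coordinates in
`S`) is totally positive definite (`hdef`).  If `G` is universal, i.e. represents every totally
positive element of `𝓞 K` (`huniv`), then the quadratic subform of `G` obtained by setting all
proper variables to zero is universal: every totally positive `α ∈ 𝓞 K` is represented by `G`
with all proper variables put to `0`. -/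
theorem genform_universal_has_universal_quadratic_subform
    (K : Type*) [Field K] [NumberField K]
    (hdeg : Module.finrank ℚ K = 2)
    (φ₁ φ₂ : K →+* ℝ) (hφ : φ₁ ≠ φ₂)
    (τ : K ≃ₐ[ℚ] K) (hτ : τ ≠ AlgEquiv.refl)
    (r : ℕ) (G₀ : QuadraticForm K ((Fin r × Bool) → K))
    (hint : ∀ v : (Fin r × Bool) → 𝓞 K, IsIntegral ℤ (G₀ (fun p => (v p : K))))
    (S : Set (Fin r × Bool))
    (hS : ∀ x y : (Fin r × Bool) → K, (∀ p ∈ S, x p = y p) → G₀ x = G₀ y)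
    (hdef : ∀ x : (Fin r × Bool) → K, (∀ p ∉ S, x p = 0) → x ≠ 0 →
      0 < φ₁ (G₀ x) ∧ 0 < φ₂ (G₀ x))
    (huniv : ∀ α : 𝓞 K, 0 < φ₁ (α : K) → 0 < φ₂ (α : K) →
      ∃ z : Fin r → 𝓞 K,
        G₀ (fun p => if p.2 then τ (z p.1 : K) else (z p.1 : K)) = (α : K)) :
    ∀ α : 𝓞 K, 0 < φ₁ (α : K) → 0 < φ₂ (α : K) →
      ∃ z : Fin r → 𝓞 K,
        (∀ i : Fin r, ((i, false) ∈ S ∧ (i, true) ∈ S) → z i = 0) ∧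
        G₀ (fun p => if p.2 then τ (z p.1 : K) else (z p.1 : K)) = (α : K) := by
  classical
  intro α hα1 hα2
  -- basic facts about τ
  have h12 : ∀ x : K, φ₁ (τ x) = φ₂ x := aux_tau hdeg hφ hτ
  have h21 : ∀ x : K, φ₂ (τ x) = φ₁ x := aux_tau hdeg (Ne.symm hφ) hτ
  have hττ : ∀ x : K, τ (τ x) = x := fun x => φ₁.injective (by rw [h12, h21])
  -- the uniform positivity constant
  obtain ⟨c, hc, hcb⟩ := aux_bound φ₁ G₀ S (fun x hx hxne => (hdef x hx hxne).1)
  -- the totally positive unit with small first embedding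
  obtain ⟨ε, hε0, hε1, hε2⟩ := aux_unit hφ
  set εK : K := ((ε : 𝓞 K) : K) with hεK
  -- choose the exponent n
  obtain ⟨n, hn⟩ : ∃ n : ℕ, φ₁ (α : K) * (φ₁ εK)^(2*n) < c := by
    have hsq : (φ₁ εK)^2 < 1 := by nlinarith
    obtain ⟨n, hn⟩ := exists_pow_lt_of_lt_one (div_pos hc hα1) hsq
    refine ⟨n, ?_⟩
    rw [pow_mul]
    calc φ₁ (α : K) * ((φ₁ εK)^2)^n < φ₁ (α : K) * (c / φ₁ (α : K)) :=
          mul_lt_mul_of_pos_left hn hα1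
    _ = c := by field_simp
  -- the element α · ε^(2n) and its representation
  set α' : 𝓞 K := α * (ε : 𝓞 K)^(2*n) with hα'
  have hα'K : (α' : K) = (α : K) * εK^(2*n) := by
    rw [hα']; push_cast; ring
  have hα'1 : 0 < φ₁ (α' : K) := by
    rw [hα'K, map_mul, map_pow]; positivity
  have hα'2 : 0 < φ₂ (α' : K) := by
    rw [hα'K, map_mul, map_pow]; positivity
  have hα'lt : φ₁ (α' : K) < c := by
    rw [hα'K, map_mul, map_pow]; exact hn
  obtain ⟨z, hz⟩ := huniv α' hα'1 hα'2
  set vz : (Fin r × Bool) → K :=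
    fun p => if p.2 then τ (z p.1 : K) else (z p.1 : K) with hvz
  -- the proper variables of the representation vanish
  have hzero : ∀ i : Fin r, (i, false) ∈ S → (i, true) ∈ S → z i = 0 := by
    intro i hif hit
    by_contra hne
    have hneK : (z i : K) ≠ 0 := fun h =>
      hne (NumberField.RingOfIntegers.coe_eq_zero_iff.mp h)
    set x : (Fin r × Bool) → K := fun p => if p ∈ S then vz p else 0 with hx
    have hxsupp : ∀ p ∉ S, x p = 0 := fun p hp => by simp [hx, hp]
    have hGx : G₀ x = G₀ vz := hS x vz (fun p hp => by simp [hx, hp])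
    have hnorm := aux_norm hdeg hφ hne
    have hone : 1 ≤ |φ₁ (z i : K)| ∨ 1 ≤ |φ₂ (z i : K)| := by
      by_contra hcon
      push_neg at hcon
      nlinarith [abs_nonneg (φ₁ (z i : K)), abs_nonneg (φ₂ (z i : K))]
    have hkey : c ≤ φ₁ (G₀ x) := by
      rcases hone with h1 | h1
      · have hb := hcb x hxsupp (i, false)
        have hxv : x (i, false) = (z i : K) := by simp [hx, hvz, hif]
        rw [hxv] at hb
        have hsq1 : 1 ≤ (φ₁ (z i : K))^2 := by nlinarith [sq_abs (φ₁ (z i : K))]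
        nlinarith
      · have hb := hcb x hxsupp (i, true)
        have hxv : x (i, true) = τ (z i : K) := by simp [hx, hvz, hit]
        rw [hxv] at hb
        rw [h12] at hb
        have hsq1 : 1 ≤ (φ₂ (z i : K))^2 := by nlinarith [sq_abs (φ₂ (z i : K))]
        nlinarith
    have hlt : φ₁ (G₀ vz) < c := by rw [hvz, hz]; exact hα'lt
    rw [hGx] at hkey
    linarith
  -- the scaling factor
  set η : K := (((ε⁻¹ : (𝓞 K)ˣ) : 𝓞 K) : K)^n with hη
  have hηε : η * εK^n = 1 := by
    rw [hη, hεK, ← mul_pow]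
    have h1 : (((ε⁻¹ : (𝓞 K)ˣ) : 𝓞 K) : K) * ((ε : 𝓞 K) : K) = 1 := by
      have : ((ε⁻¹ : (𝓞 K)ˣ) : 𝓞 K) * ((ε : (𝓞 K)ˣ) : 𝓞 K) = 1 := by
        rw [← Units.val_mul, inv_mul_cancel, Units.val_one]
      calc (((ε⁻¹ : (𝓞 K)ˣ) : 𝓞 K) : K) * ((ε : 𝓞 K) : K)
          = ((((ε⁻¹ : (𝓞 K)ˣ) : 𝓞 K) * ((ε : (𝓞 K)ˣ) : 𝓞 K) : 𝓞 K) : K) := by push_cast; ring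
      _ = 1 := by rw [this]; push_cast; ring
    rw [h1, one_pow]
  -- integrality of τ-images
  have hτint : ∀ γ : 𝓞 K, IsIntegral ℤ (τ (γ : K)) := by
    intro γ
    exact (NumberField.RingOfIntegers.isIntegral_coe γ).map (τ.toAlgHom.restrictScalars ℤ)
  set τO : 𝓞 K → 𝓞 K :=
    NumberField.RingOfIntegers.restrict (fun γ : 𝓞 K => τ (γ : K)) hτint with hτO
  have hτOval : ∀ γ : 𝓞 K, ((τO γ : 𝓞 K) : K) = τ (γ : K) := fun γ => rfl
  -- the new representation
  set w : Fin r → 𝓞 K := fun i =>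
    if (i, false) ∈ S ∧ (i, true) ∈ S then 0
    else if (i, false) ∈ S then ((ε⁻¹^n : (𝓞 K)ˣ) : 𝓞 K) * z i
    else if (i, true) ∈ S then τO ((ε⁻¹^n : (𝓞 K)ˣ) : 𝓞 K) * z i
    else 0
    with hw
  have hinvpow : ((((ε⁻¹^n : (𝓞 K)ˣ) : 𝓞 K)) : K) = η := by
    rw [hη]
    norm_cast
  have hwval : ∀ p ∈ S,
      (fun p : Fin r × Bool => if p.2 then τ (w p.1 : K) else (w p.1 : K)) p
        = (η • vz) p := by
    rintro ⟨i, b⟩ hp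
    cases b
    · -- b = false
      show (w i : K) = (η • vz) (i, false)
      have hvzf : vz (i, false) = (z i : K) := by simp [hvz]
      rw [Pi.smul_apply, smul_eq_mul, hvzf]
      by_cases hboth : (i, false) ∈ S ∧ (i, true) ∈ S
      · have hzi : z i = 0 := hzero i hboth.1 hboth.2
        have hwi : w i = 0 := by rw [hw]; exact if_pos hboth
        rw [hwi, hzi]
        simp
      · have hif : (i, false) ∈ S := hp
        have hwi : w i = ((ε⁻¹^n : (𝓞 K)ˣ) : 𝓞 K) * z i := by
          rw [hw]
          simp only []
          rw [if_neg hboth, if_pos hif]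
        rw [hwi]
        calc ((((ε⁻¹^n : (𝓞 K)ˣ) : 𝓞 K) * z i : 𝓞 K) : K)
            = ((((ε⁻¹^n : (𝓞 K)ˣ) : 𝓞 K)) : K) * (z i : K) := by push_cast; ring
        _ = η * (z i : K) := by rw [hinvpow]
    · -- b = true
      show τ (w i : K) = (η • vz) (i, true)
      have hvzt : vz (i, true) = τ (z i : K) := by simp [hvz]
      rw [Pi.smul_apply, smul_eq_mul, hvzt]
      by_cases hboth : (i, false) ∈ S ∧ (i, true) ∈ S
      · have hzi : z i = 0 := hzero i hboth.1 hboth.2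
        have hwi : w i = 0 := by rw [hw]; exact if_pos hboth
        rw [hwi, hzi]
        simp
      · have hit : (i, true) ∈ S := hp
        have hif : (i, false) ∉ S := fun h => hboth ⟨h, hit⟩
        have hwi : w i = τO ((ε⁻¹^n : (𝓞 K)ˣ) : 𝓞 K) * z i := by
          rw [hw]
          simp only []
          rw [if_neg hboth, if_neg hif, if_pos hit]
        rw [hwi]
        have hcoe : ((τO ((ε⁻¹^n : (𝓞 K)ˣ) : 𝓞 K) * z i : 𝓞 K) : K)
            = τ η * (z i : K) := by
          calc ((τO ((ε⁻¹^n : (𝓞 K)ˣ) : 𝓞 K) * z i : 𝓞 K) : K)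
              = ((τO ((ε⁻¹^n : (𝓞 K)ˣ) : 𝓞 K) : 𝓞 K) : K) * (z i : K) := by push_cast; ring
          _ = τ η * (z i : K) := by rw [hτOval, hinvpow]
        rw [hcoe, map_mul, hττ]
  have hwzero : ∀ i : Fin r, ((i, false) ∈ S ∧ (i, true) ∈ S) → w i = 0 := by
    intro i hi
    rw [hw]
    exact if_pos hi
  refine ⟨w, hwzero, ?_⟩
  have hGw : G₀ (fun p => if p.2 then τ (w p.1 : K) else (w p.1 : K)) = G₀ (η • vz) :=
    hS _ _ hwval
  rw [hGw, QuadraticMap.map_smul, hvz, hz, smul_eq_mul]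
  rw [hα'K]
  have h2n : εK^(2*n) = (εK^n)^2 := by rw [← pow_mul, Nat.mul_comm]
  calc η * η * ((α : K) * εK^(2*n)) = (α : K) * (η * εK^n)^2 := by rw [h2n]; ring
  _ = (α : K) := by rw [hηε]; ring
end

section
/- Let K be a real quadratic field with nontrivial automorphism τ, and let G₀ be a quadratic form in 2r variables over K. Then G₀ is totally positive semidefinite (i.e., G₀(x) ⪰ 0 for all x ∈ K^{2r}) if and only if the generalized form G(z₁,…,z_r) = G₀(z₁, τ(z₁), …, z_r, τ(z_r)) attains only totally nonnegative values, i.e., G(z₁,…,z_r) ⪰ 0 for all (z₁,…,z_r) ∈ K^r. -/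
open Finset
open Finset in
lemma aux_comp_tau {K : Type*} [Field K] [NumberField K]
    (hdeg : Module.finrank ℚ K = 2)
    (φ₁ φ₂ : K →+* ℝ) (hφ : φ₁ ≠ φ₂)
    (τ : K ≃ₐ[ℚ] K) (hτ : τ ≠ AlgEquiv.refl) :
    ∀ a, φ₁ (τ a) = φ₂ a := by
  classical
  set j : ℝ →+* ℂ := Complex.ofRealHom with hj
  have hjinj : Function.Injective j := Complex.ofReal_injective
  set ψ₁ := j.comp φ₁
  set ψ₂ := j.comp φ₂
  set ψ₃ := j.comp (φ₁.comp (τ : K →ₐ[ℚ] K).toRingHom)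
  have h12 : ψ₁ ≠ ψ₂ := by
    intro h; apply hφ; ext a
    exact hjinj (congrArg (fun f => f a) h)
  have h13 : ψ₃ ≠ ψ₁ := by
    intro h; apply hτ; ext a
    have := hjinj (congrArg (fun f => f a) h)
    simpa using φ₁.injective this
  have hcard : Fintype.card (K →+* ℂ) = 2 := by
    rw [NumberField.Embeddings.card K ℂ, hdeg]
  have h32 : ψ₃ = ψ₂ := by
    by_contra h32
    have hle : ({ψ₁, ψ₂, ψ₃} : Finset (K →+* ℂ)).card ≤ 2 := by
      calc ({ψ₁, ψ₂, ψ₃} : Finset (K →+* ℂ)).card ≤ (Finset.univ : Finset (K →+* ℂ)).card :=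
            Finset.card_le_card (Finset.subset_univ _)
        _ = 2 := by rw [Finset.card_univ, hcard]
    have hc3 : ({ψ₁, ψ₂, ψ₃} : Finset (K →+* ℂ)).card = 3 := by
      rw [Finset.card_insert_of_notMem (by simp [h12, Ne.symm h13]),
        Finset.card_insert_of_notMem (by simp [Ne.symm h32]), Finset.card_singleton]
    omega
  intro a
  exact hjinj (congrArg (fun f => f a) h32)

lemma aux_dense {K : Type*} [Field K] [NumberField K]
    (φ₁ φ₂ : K →+* ℝ) (hφ : φ₁ ≠ φ₂) :
    DenseRange (fun a : K => (φ₁ a, φ₂ a)) := by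
  obtain ⟨θ, hθ⟩ : ∃ θ : K, φ₁ θ ≠ φ₂ θ := by
    by_contra h
    push_neg at h
    exact hφ (RingHom.ext h)
  set α := φ₁ θ
  set β := φ₂ θ
  have hd : α - β ≠ 0 := sub_ne_zero.mpr hθ
  rw [Metric.denseRange_iff]
  rintro ⟨s, t⟩ ε hε
  set b₀ : ℝ := (s - t) / (α - β)
  set a₀ : ℝ := s - b₀ * α
  have hs : s = a₀ + b₀ * α := by ring
  have ht : t = a₀ + b₀ * β := by
    have : b₀ * (α - β) = s - t := div_mul_cancel₀ _ hd
    simp only [a₀]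
    nlinarith [this]
  set M : ℝ := 1 + |α| + |β|
  have hM : 0 < M := by positivity
  set δ : ℝ := ε / (2 * M)
  have hδ : 0 < δ := by positivity
  have hδM : δ * M = ε / 2 := by
    field_simp [δ]
    rw [show δ = ε / (2 * M) from rfl]; field_simp [hM.ne']
  have hM1 : (0:ℝ) ≤ M - 1 := by
    have := abs_nonneg α; have := abs_nonneg β; simp only [M]; linarith
  have hα : |α| ≤ M - 1 := by
    have := abs_nonneg β; simp only [M]; linarith
  have hβ : |β| ≤ M - 1 := by
    have := abs_nonneg α; simp only [M]; linarith
  obtain ⟨qa, hqa⟩ := exists_rat_near a₀ hδ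
  obtain ⟨qb, hqb⟩ := exists_rat_near b₀ hδ
  clear_value b₀ a₀ M δ
  refine ⟨(qa : K) + (qb : K) * θ, ?_⟩
  have e1 : φ₁ ((qa : K) + (qb : K) * θ) = (qa : ℝ) + (qb : ℝ) * α := by
    simp [map_add, map_mul, map_ratCast]
    exact Or.inl rfl
  have e2 : φ₂ ((qa : K) + (qb : K) * θ) = (qa : ℝ) + (qb : ℝ) * β := by
    simp [map_add, map_mul, map_ratCast]
    exact Or.inl rfl
  have key : ∀ γ : ℝ, |γ| ≤ M - 1 → |(a₀ + b₀ * γ) - ((qa : ℝ) + (qb : ℝ) * γ)| < ε := by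
    intro γ hγ
    have h1 : |(a₀ + b₀ * γ) - ((qa : ℝ) + (qb : ℝ) * γ)| ≤ |a₀ - qa| + |b₀ - qb| * |γ| := by
      calc |(a₀ + b₀ * γ) - ((qa : ℝ) + (qb : ℝ) * γ)|
          = |(a₀ - qa) + (b₀ - qb) * γ| := by ring_nf
        _ ≤ |a₀ - qa| + |(b₀ - qb) * γ| := abs_add_le _ _
        _ = |a₀ - qa| + |b₀ - qb| * |γ| := by rw [abs_mul]
    have h2 : |b₀ - qb| * |γ| ≤ |b₀ - qb| * (M - 1) :=
      mul_le_mul_of_nonneg_left hγ (abs_nonneg _)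
    have h3 : |b₀ - qb| * (M - 1) ≤ δ * (M - 1) :=
      mul_le_mul_of_nonneg_right hqb.le hM1
    have h5 : δ + δ * (M - 1) = δ * M := by ring
    linarith
  rw [Prod.dist_eq]
  rw [max_lt_iff]
  constructor
  · rw [Real.dist_eq, e1, hs]
    exact key α hα
  · rw [Real.dist_eq, e2, ht]
    exact key β hβ

open Finset

lemma aux_repr {K : Type*} [Field K] [CharZero K] (φ : K →+* ℝ) {ι : Type*}
    [Fintype ι] [DecidableEq ι]
    (G₀ : QuadraticForm K (ι → K)) :
    ∃ c : ι → ι → ℝ,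
      ∀ v : ι → K, φ (G₀ v) = ∑ p, ∑ q, φ (v p) * φ (v q) * c p q := by
  haveI : Invertible (2 : K) := invertibleOfNonzero two_ne_zero
  set B := QuadraticMap.associated (R := K) G₀ with hB
  set e : ι → (ι → K) := fun i j => if i = j then 1 else 0 with he
  refine ⟨fun p q => φ (B (e p) (e q)), fun v => ?_⟩
  have h0 : G₀ v = B v v := (QuadraticMap.associated_eq_self_apply K G₀ v).symm
  have hv : v = ∑ i, v i • e i := pi_eq_sum_univ v
  have h1 : B v v = ∑ p, ∑ q, v p * v q * B (e p) (e q) := by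
    conv_lhs => rw [hv]
    simp only [map_sum, LinearMap.sum_apply, LinearMap.map_smul, LinearMap.smul_apply,
      smul_eq_mul, Finset.mul_sum]
    rw [Finset.sum_comm]
    exact Finset.sum_congr rfl fun p _ => Finset.sum_congr rfl fun q _ => by ring
  rw [h0, h1, map_sum]
  congr 1
  ext p
  rw [map_sum]
  congr 1
  ext q
  rw [map_mul, map_mul]

lemma aux_key {n : ℕ} (f : ((Fin n × Bool) → ℝ) → ℝ) (hf : Continuous f)
    (S : Set (ℝ × ℝ)) (hS : Dense S)
    (h : ∀ g : Fin n → ℝ × ℝ, (∀ i, g i ∈ S) →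
      0 ≤ f (fun p => if p.2 then (g p.1).2 else (g p.1).1)) :
    ∀ w, 0 ≤ f w := by
  set e : (Fin n → ℝ × ℝ) → ((Fin n × Bool) → ℝ) :=
    fun g p => if p.2 then (g p.1).2 else (g p.1).1 with he
  have hec : Continuous e := by
    refine continuous_pi fun p => ?_
    simp only [he]
    split
    · exact (continuous_apply p.1).snd
    · exact (continuous_apply p.1).fst
  have hd : Dense (Set.pi Set.univ (fun _ : Fin n => S)) :=
    dense_pi Set.univ (fun _ _ => hS)
  have hcl : IsClosed {g : Fin n → ℝ × ℝ | 0 ≤ f (e g)} :=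
    isClosed_le continuous_const (hf.comp hec)
  have hsub : Set.pi Set.univ (fun _ : Fin n => S) ⊆ {g | 0 ≤ f (e g)} :=
    fun g hg => h g (fun i => hg i (Set.mem_univ i))
  have hall : ∀ g, 0 ≤ f (e g) := by
    have h1 := hcl.closure_subset_iff.mpr hsub
    rw [hd.closure_eq] at h1
    exact fun g => h1 (Set.mem_univ g)
  intro w
  have hw : e (fun i => (w (i, false), w (i, true))) = w := by
    funext p
    obtain ⟨i, b⟩ := p
    cases b <;> rfl
  rw [← hw]
  exact hall (fun i => (w (i, false), w (i, true)))

lemma aux_half {K : Type*} [Field K] [NumberField K]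
    (φ ψ : K →+* ℝ) (hφψ : φ ≠ ψ)
    (τ : K ≃ₐ[ℚ] K) (hτφ : ∀ a, φ (τ a) = ψ a)
    (r : ℕ) (G₀ : QuadraticForm K ((Fin r × Bool) → K))
    (h : ∀ z : Fin r → K, 0 ≤ φ (G₀ (fun p => if p.2 then τ (z p.1) else z p.1))) :
    ∀ x : (Fin r × Bool) → K, 0 ≤ φ (G₀ x) := by
  obtain ⟨c, hc⟩ := aux_repr φ G₀
  set f : ((Fin r × Bool) → ℝ) → ℝ := fun w => ∑ p, ∑ q, w p * w q * c p q with hf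
  have hcont : Continuous f := continuous_finset_sum _ fun p _ =>
    continuous_finset_sum _ fun q _ =>
      ((continuous_apply p).mul (continuous_apply q)).mul continuous_const
  have hfφ : ∀ v : (Fin r × Bool) → K, f (fun p => φ (v p)) = φ (G₀ v) := fun v => (hc v).symm
  have key := aux_key f hcont (Set.range fun a : K => (φ a, ψ a)) (aux_dense φ ψ hφψ) ?_
  · intro x
    have hx := key (fun p => φ (x p))
    rwa [hfφ] at hx
  · intro g hg
    have hex : ∀ i, ∃ a : K, (φ a, ψ a) = g i := fun i => hg i
    choose z hz using hex
    have hv : (fun p : Fin r × Bool => if p.2 then (g p.1).2 else (g p.1).1)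
        = fun p => φ (if p.2 then τ (z p.1) else z p.1) := by
      funext p
      obtain ⟨i, b⟩ := p
      cases b
      · simp [← hz i]
      · simp [← hz i, hτφ]
    rw [hv, hfφ (fun p => if p.2 then τ (z p.1) else z p.1)]
    exact h z

/-- **Section 4, semidefiniteness equivalence.** Let `K` be a real quadratic field (a totally
real number field of degree 2, presented via its two distinct real embeddings
`φ₁ φ₂ : K →+* ℝ`) with nontrivial automorphism `τ`, and let `G₀` be a quadratic form in `2r`
variables over `K` (indexed by `Fin r × Bool`).  Then `G₀` is totally positive semidefinite
(`G₀ x ⪰ 0` for all `x ∈ K^{2r}`) if and only if the generalized form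
`G(z₁,…,z_r) = G₀(z₁, τ(z₁), …, z_r, τ(z_r))` attains only totally nonnegative values on
`K^r`. -/
theorem totally_psd_iff_genform_nonneg
    (K : Type*) [Field K] [NumberField K]
    (hdeg : Module.finrank ℚ K = 2)
    (φ₁ φ₂ : K →+* ℝ) (hφ : φ₁ ≠ φ₂)
    (τ : K ≃ₐ[ℚ] K) (hτ : τ ≠ AlgEquiv.refl)
    (r : ℕ) (G₀ : QuadraticForm K ((Fin r × Bool) → K)) :
    (∀ x : (Fin r × Bool) → K, 0 ≤ φ₁ (G₀ x) ∧ 0 ≤ φ₂ (G₀ x)) ↔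
    (∀ z : Fin r → K,
      0 ≤ φ₁ (G₀ (fun p => if p.2 then τ (z p.1) else z p.1)) ∧
      0 ≤ φ₂ (G₀ (fun p => if p.2 then τ (z p.1) else z p.1))) := by
  constructor
  · exact fun h z => h _
  · intro h x
    have h1τ := aux_comp_tau hdeg φ₁ φ₂ hφ τ hτ
    have h2τ := aux_comp_tau hdeg φ₂ φ₁ hφ.symm τ hτ
    exact ⟨aux_half φ₁ φ₂ hφ τ h1τ r G₀ (fun z => (h z).1) x,
           aux_half φ₂ φ₁ hφ.symm τ h2τ r G₀ (fun z => (h z).2) x⟩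
end

section
/- Let ε = 3 + 2√2 ∈ ℤ[√2]. For every natural number n, writing ε^{2n} = a + b√2 with a, b ∈ ℤ, the integer b is divisible by 3; equivalently, for every n there exists z ∈ ℤ[√2] with 2z − τ(z) = ε^{2n}. -/
/-- **Section 4.** Let `ε = 3 + 2√2 ∈ ℤ[√2]`.  For every natural `n`, writing
`ε^(2n) = a + b√2` with `a, b ∈ ℤ`, the integer `b` is divisible by `3`; equivalently, for
every `n` there is `z ∈ ℤ[√2]` with `2z − τ(z) = ε^(2n)` (where `τ = star` is conjugation). -/
theorem eps_even_power_im_div_three (n : ℕ) :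
    (3 : ℤ) ∣ (((⟨3, 2⟩ : ℤ√2)) ^ (2 * n)).im ∧
    ∃ z : ℤ√2, 2 * z - star z = (⟨3, 2⟩ : ℤ√2) ^ (2 * n) := by
  have h : (3 : ℤ) ∣ (((⟨3, 2⟩ : ℤ√2)) ^ (2 * n)).im := by
    induction n with
    | zero => simp
    | succ k ih =>
      have : 2 * (k + 1) = 2 * k + 2 := by ring
      rw [this, pow_add]
      obtain ⟨c, hc⟩ := ih
      refine ⟨((⟨3, 2⟩ : ℤ√2) ^ (2*k)).re * 4 + c * 17, ?_⟩
      simp [Zsqrtd.im_mul, pow_succ, Zsqrtd.re_mul, hc]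
      ring
  refine ⟨h, ?_⟩
  obtain ⟨c, hc⟩ := h
  refine ⟨⟨((⟨3, 2⟩ : ℤ√2) ^ (2*n)).re, c⟩, ?_⟩
  ext <;> simp [Zsqrtd.ext_iff] <;> omega
end

section
/- Let ε = 3 + 2√2 ∈ ℤ[√2] and g(z) := (2z − τ(z))². For every natural number n there exists z ∈ ℤ[√2] such that g(z) = ε^{4n}, i.e., (2z − τ(z))² = (3 + 2√2)^{4n}. -/
lemma rep_eps_even_powers (n : ℕ) :
    ∃ z : ℤ√2, 2 * z - star z = (⟨3, 2⟩ : ℤ√2) ^ (2 * n) := by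
  induction n with
  | zero =>
      refine ⟨1, ?_⟩
      ext <;> simp
  | succ n ih =>
      obtain ⟨z, hz⟩ := ih
      refine ⟨⟨17 * z.re + 72 * z.im, 4 * z.re + 17 * z.im⟩, ?_⟩
      have h2 : (⟨3, 2⟩ : ℤ√2) ^ (2 * (n + 1)) =
          (⟨3, 2⟩ : ℤ√2) ^ (2 * n) * ⟨17, 12⟩ := by
        have hsq : (⟨3, 2⟩ : ℤ√2) * ⟨3, 2⟩ = ⟨17, 12⟩ := by
          ext <;> simp [Zsqrtd.re_mul, Zsqrtd.im_mul]
        rw [show 2 * (n + 1) = 2 * n + 2 by ring, pow_add, sq, hsq]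
      rw [h2, ← hz]
      ext <;>
        simp [Zsqrtd.re_mul, Zsqrtd.im_mul, Zsqrtd.re_sub, Zsqrtd.im_sub] <;> ring

/-- **Section 4.** Let `ε = 3 + 2√2 ∈ ℤ[√2]` and `g(z) := (2z − τ(z))²` (where `τ = star` is
conjugation).  For every natural `n` there is `z ∈ ℤ[√2]` with `g(z) = ε^(4n)`, i.e.
`(2z − τ(z))² = (3 + 2√2)^(4n)`. -/
theorem g_represents_eps_fourth_powers (n : ℕ) :
    ∃ z : ℤ√2, (2 * z - star z) ^ 2 = (⟨3, 2⟩ : ℤ√2) ^ (4 * n) := by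
  obtain ⟨z, hz⟩ := rep_eps_even_powers n
  exact ⟨z, by rw [hz, ← pow_mul, show 2 * n * 2 = 4 * n by ring]⟩
end

section
/- In ℤ[√2], set ε = 3 + 2√2, β = 2 + √2, g(z) = (2z − τ(z))², and let H(z₁,…,z₈) = g(z₁) + ε·g(z₂) + ε²·g(z₃) + ε³·g(z₄) + β·g(z₅) + εβ·g(z₆) + ε²β·g(z₇) + ε³β·g(z₈). Then H represents every indecomposable element of ℤ[√2]⁺: for every totally positive α ∈ ℤ[√2] that cannot be written as a sum of two totally positive elements of ℤ[√2], there exist z₁,…,z₈ ∈ ℤ[√2] with H(z₁,…,z₈) = α. -/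
/-- `α = a + b√2 ∈ ℤ[√2]` is totally positive: `a + b√2 > 0` and `a − b√2 > 0` in `ℝ`. -/
def Zsqrt2.TotPos (α : ℤ√2) : Prop :=
  0 < (α.re : ℝ) + (α.im : ℝ) * Real.sqrt 2 ∧
  0 < (α.re : ℝ) - (α.im : ℝ) * Real.sqrt 2

/-- The generalized form `H` of the counterexample in Section 4, with `ε = 3 + 2√2`,
`β = 2 + √2` and `g(z) = (2z − τ(z))²` (here `τ = star` is conjugation):
`H(z₁,…,z₈) = g(z₁) + ε g(z₂) + ε² g(z₃) + ε³ g(z₄) + β g(z₅) + εβ g(z₆) + ε²β g(z₇)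
  + ε³β g(z₈)`. -/
def Zsqrt2.H (z : Fin 8 → ℤ√2) : ℤ√2 :=
  (2 * z 0 - star (z 0)) ^ 2
    + (⟨3, 2⟩ : ℤ√2) * (2 * z 1 - star (z 1)) ^ 2
    + (⟨3, 2⟩ : ℤ√2) ^ 2 * (2 * z 2 - star (z 2)) ^ 2
    + (⟨3, 2⟩ : ℤ√2) ^ 3 * (2 * z 3 - star (z 3)) ^ 2
    + (⟨2, 1⟩ : ℤ√2) * (2 * z 4 - star (z 4)) ^ 2
    + (⟨3, 2⟩ : ℤ√2) * (⟨2, 1⟩ : ℤ√2) * (2 * z 5 - star (z 5)) ^ 2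
    + (⟨3, 2⟩ : ℤ√2) ^ 2 * (⟨2, 1⟩ : ℤ√2) * (2 * z 6 - star (z 6)) ^ 2
    + (⟨3, 2⟩ : ℤ√2) ^ 3 * (⟨2, 1⟩ : ℤ√2) * (2 * z 7 - star (z 7)) ^ 2

namespace Zsqrt2Aux

set_option linter.unreachableTactic false
set_option linter.unusedTactic false

/-- Integer characterization of total positivity. -/
def IntPos (α : ℤ√2) : Prop := 0 < α.re ∧ 2 * α.im ^ 2 < α.re ^ 2

lemma totPos_iff (α : ℤ√2) : Zsqrt2.TotPos α ↔ IntPos α := by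
  have hs : Real.sqrt 2 ^ 2 = 2 := Real.sq_sqrt (by norm_num)
  have hs0 : (0:ℝ) < Real.sqrt 2 := Real.sqrt_pos.2 (by norm_num)
  constructor
  · rintro ⟨h1, h2⟩
    refine ⟨?_, ?_⟩
    · have : (0:ℝ) < α.re := by nlinarith
      exact_mod_cast this
    · have : 2 * (α.im:ℝ)^2 < (α.re:ℝ)^2 := by nlinarith [mul_pos h1 h2]
      exact_mod_cast this
  · rintro ⟨h1, h2⟩
    have h1' : (0:ℝ) < α.re := by exact_mod_cast h1
    have h2' : 2 * (α.im:ℝ)^2 < (α.re:ℝ)^2 := by exact_mod_cast h2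
    constructor <;>
      nlinarith [sq_nonneg ((α.re:ℝ) + α.im * Real.sqrt 2),
        sq_nonneg ((α.re:ℝ) - α.im * Real.sqrt 2), mul_pos h1' hs0]

/-- The unit `ε = 3 + 2√2` of `ℤ√2`. -/
def E : (ℤ√2)ˣ := ⟨⟨3,2⟩, ⟨3,-2⟩, by decide, by decide⟩

lemma intPos_mulE {x : ℤ√2} (hx : IntPos x) : IntPos ((⟨3,2⟩ : ℤ√2) * x) := by
  obtain ⟨h1, h2⟩ := hx
  constructor <;> simp [Zsqrtd.re_mul, Zsqrtd.im_mul] <;>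
    nlinarith [sq_nonneg x.im, sq_nonneg (3*x.re+4*x.im)]

lemma intPos_mulEinv {x : ℤ√2} (hx : IntPos x) : IntPos ((⟨3,-2⟩ : ℤ√2) * x) := by
  obtain ⟨h1, h2⟩ := hx
  constructor <;> simp [Zsqrtd.re_mul, Zsqrtd.im_mul] <;>
    nlinarith [sq_nonneg x.im, sq_nonneg (3*x.re-4*x.im)]

lemma intPos_mk {x y : ℤ} (h1 : 0 < x) (h2 : 2*y^2 < x^2) : IntPos ⟨x,y⟩ := ⟨h1, h2⟩

/-- Classification of the indecomposables of `ℤ[√2]⁺`: they are `ε^m` and `ε^m (2+√2)`. -/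
lemma classify_aux : ∀ n : ℕ, ∀ α : ℤ√2, α.re.toNat = n → IntPos α →
    (¬∃ β γ : ℤ√2, IntPos β ∧ IntPos γ ∧ β + γ = α) →
    ∃ m : ℤ, α = ((E^m : (ℤ√2)ˣ) : ℤ√2) ∨ α = ((E^m : (ℤ√2)ˣ) : ℤ√2) * (⟨2,1⟩ : ℤ√2) := by
  intro n
  induction n using Nat.strong_induction_on with
  | _ n ih =>
    rintro ⟨a, b⟩ hn ⟨ha, hnorm⟩ hind
    simp only [] at ha hnorm hn
    rcases lt_trichotomy b 0 with hb | hb | hb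
    · -- b < 0
      rcases le_or_gt (-2*b) a with hcase | hcase
      · rcases eq_or_lt_of_le hcase with heq | hlt
        · rcases eq_or_lt_of_le (show b ≤ -1 by omega) with hb1 | hb2
          · obtain rfl : b = -1 := hb1
            obtain rfl : a = 2 := by omega
            refine ⟨-1, Or.inr ?_⟩
            rw [show ((E^(-1:ℤ) : (ℤ√2)ˣ) : ℤ√2) = ⟨3,-2⟩ from by rw [zpow_neg_one]; rfl]
            decide
          · exfalso
            refine hind ⟨⟨2,-1⟩, ⟨a-2, b+1⟩, intPos_mk (by norm_num) (by norm_num),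
              intPos_mk (by omega) (by nlinarith), by ext <;> simp <;> ring⟩
        · rcases eq_or_lt_of_le (show b ≤ -1 by omega) with hb1 | hb2
          · exfalso
            refine hind ⟨⟨1,0⟩, ⟨a-1, b⟩, intPos_mk (by norm_num) (by norm_num),
              intPos_mk (by omega) (by nlinarith [show 3 ≤ a by omega, show b = -1 by omega]),
              by ext <;> simp <;> ring⟩
          · exfalso
            refine hind ⟨⟨2,-1⟩, ⟨a-2, b+1⟩, intPos_mk (by norm_num) (by norm_num),
              intPos_mk (by omega) (by nlinarith), by ext <;> simp <;> ring⟩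
      · -- a < -2b : reduce via α' = ε * α
        have h34 : 0 < 3*a + 4*b := by nlinarith
        have hlt : (3*a+4*b).toNat < n := by omega
        have key : (⟨a, b⟩ : ℤ√2) = (⟨3,-2⟩ : ℤ√2) * ⟨3*a+4*b, 2*a+3*b⟩ := by
          ext <;> simp [Zsqrtd.re_mul, Zsqrtd.im_mul] <;> ring
        obtain ⟨m, hm⟩ := ih _ hlt ⟨3*a+4*b, 2*a+3*b⟩ rfl (intPos_mk h34 (by nlinarith))
          (by
            rintro ⟨β, γ, h1, h2, h3⟩
            refine hind ⟨(⟨3,-2⟩:ℤ√2)*β, (⟨3,-2⟩:ℤ√2)*γ, intPos_mulEinv h1, intPos_mulEinv h2, ?_⟩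
            rw [← mul_add, h3, ← key])
        have hEinv : ((E^(m-1) : (ℤ√2)ˣ) : ℤ√2) = (⟨3,-2⟩:ℤ√2) * ((E^m : (ℤ√2)ˣ) : ℤ√2) := by
          rw [show m - 1 = -1 + m by ring, zpow_add, Units.val_mul]; rfl
        refine ⟨m - 1, ?_⟩
        rcases hm with hm | hm
        · exact Or.inl (by rw [key, hm, hEinv])
        · exact Or.inr (by rw [key, hm, hEinv, mul_assoc])
    · -- b = 0
      subst hb
      rcases eq_or_lt_of_le (show 1 ≤ a by omega) with h1 | h2
      · obtain rfl : a = 1 := h1.symm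
        exact ⟨0, Or.inl (by rw [zpow_zero]; rfl)⟩
      · exfalso
        exact hind ⟨⟨1,0⟩, ⟨a-1, 0⟩, intPos_mk (by norm_num) (by norm_num),
          intPos_mk (by omega) (by nlinarith), by ext <;> simp⟩
    · -- b > 0
      rcases le_or_gt (2*b) a with hcase | hcase
      · rcases eq_or_lt_of_le (show 1 ≤ b by omega) with hb1 | hb2
        · rcases eq_or_lt_of_le (show 2 ≤ a by omega) with ha2 | ha3
          · obtain rfl : b = 1 := hb1.symm
            obtain rfl : a = 2 := ha2.symm
            exact ⟨0, Or.inr (by rw [zpow_zero]; decide)⟩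
          · exfalso
            exact hind ⟨⟨1,0⟩, ⟨a-1, b⟩, intPos_mk (by norm_num) (by norm_num),
              intPos_mk (by omega) (by nlinarith [show b = 1 by omega]), by ext <;> simp⟩
        · exfalso
          exact hind ⟨⟨2,1⟩, ⟨a-2, b-1⟩, intPos_mk (by norm_num) (by norm_num),
            intPos_mk (by omega) (by nlinarith), by ext <;> simp⟩
      · -- a < 2b : reduce via α' = ε⁻¹ * α
        have h34 : 4*b < 3*a := by nlinarith
        have hlt : (3*a-4*b).toNat < n := by omega
        have key : (⟨a, b⟩ : ℤ√2) = (⟨3,2⟩ : ℤ√2) * ⟨3*a-4*b, 3*b-2*a⟩ := by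
          ext <;> simp [Zsqrtd.re_mul, Zsqrtd.im_mul] <;> ring
        obtain ⟨m, hm⟩ := ih _ hlt ⟨3*a-4*b, 3*b-2*a⟩ rfl (intPos_mk (by omega) (by nlinarith))
          (by
            rintro ⟨β, γ, h1, h2, h3⟩
            refine hind ⟨(⟨3,2⟩:ℤ√2)*β, (⟨3,2⟩:ℤ√2)*γ, intPos_mulE h1, intPos_mulE h2, ?_⟩
            rw [← mul_add, h3, ← key])
        have hE : ((E^(m+1) : (ℤ√2)ˣ) : ℤ√2) = (⟨3,2⟩:ℤ√2) * ((E^m : (ℤ√2)ˣ) : ℤ√2) := by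
          rw [show m + 1 = 1 + m by ring, zpow_add, Units.val_mul]; rfl
        refine ⟨m + 1, ?_⟩
        rcases hm with hm | hm
        · exact Or.inl (by rw [key, hm, hE])
        · exact Or.inr (by rw [key, hm, hE, mul_assoc])

/-- The imaginary part of `ε^(2q)` is divisible by 3. -/
lemma im_div3 : ∀ q : ℤ, ∃ x y : ℤ, ((E^(2*q) : (ℤ√2)ˣ) : ℤ√2) = ⟨x, 3*y⟩ := by
  have base : ∀ q : ℤ, ∃ x y : ℤ, (((E^2)^q : (ℤ√2)ˣ) : ℤ√2) = ⟨x, 3*y⟩ := by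
    intro q
    induction q using Int.induction_on with
    | zero => exact ⟨1, 0, rfl⟩
    | succ k ihk =>
      obtain ⟨x, y, h⟩ := ihk
      refine ⟨17*x + 72*y, 4*x + 17*y, ?_⟩
      rw [show ((k:ℤ)+1) = (k:ℤ) + 1 from rfl, zpow_add_one, Units.val_mul, h,
        show (((E^2) : (ℤ√2)ˣ) : ℤ√2) = ⟨17,12⟩ from rfl]
      ext <;> simp [Zsqrtd.re_mul, Zsqrtd.im_mul] <;> ring
    | pred k ihk =>
      obtain ⟨x, y, h⟩ := ihk
      refine ⟨17*x - 72*y, -4*x + 17*y, ?_⟩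
      rw [show (-(k:ℤ)-1) = -(k:ℤ) + (-1) from by ring, zpow_add, Units.val_mul, h,
        show (((E^2)^(-1:ℤ) : (ℤ√2)ˣ) : ℤ√2) = ⟨17,-12⟩ from by rw [zpow_neg_one]; rfl]
      ext <;> simp [Zsqrtd.re_mul, Zsqrtd.im_mul] <;> ring
  intro q
  obtain ⟨x, y, h⟩ := base q
  refine ⟨x, y, ?_⟩
  rw [← h]
  congr 1
  rw [← zpow_natCast E 2, ← zpow_mul]
  norm_num

lemma unit_comb (j k : ℤ) :
    ((E^j : (ℤ√2)ˣ) : ℤ√2) * ((E^k : (ℤ√2)ˣ) : ℤ√2) = ((E^(j+k) : (ℤ√2)ˣ) : ℤ√2) := by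
  rw [← Units.val_mul, ← zpow_add]

end Zsqrt2Aux

open Zsqrt2Aux in
/-- **Section 4.** The generalized form `H` represents every indecomposable element of
`ℤ[√2]⁺`: for every totally positive `α ∈ ℤ[√2]` that is not a sum of two totally positive
elements of `ℤ[√2]`, there are `z₁,…,z₈ ∈ ℤ[√2]` with `H(z₁,…,z₈) = α`. -/
theorem H_represents_indecomposables (α : ℤ√2) (hα : Zsqrt2.TotPos α)
    (hind : ¬∃ β γ : ℤ√2, Zsqrt2.TotPos β ∧ Zsqrt2.TotPos γ ∧ β + γ = α) :
    ∃ z : Fin 8 → ℤ√2, Zsqrt2.H z = α := by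
  rw [totPos_iff] at hα
  replace hind : ¬∃ β γ : ℤ√2, IntPos β ∧ IntPos γ ∧ β + γ = α := by
    rintro ⟨β, γ, h1, h2, h3⟩
    exact hind ⟨β, γ, (totPos_iff β).2 h1, (totPos_iff γ).2 h2, h3⟩
  obtain ⟨m, hm⟩ := classify_aux _ α rfl hα hind
  obtain ⟨x, y, hxy⟩ := im_div3 (m/4)
  have key : (2 * (⟨x,y⟩:ℤ√2) - star ⟨x,y⟩) = (⟨x, 3*y⟩ : ℤ√2) := by
    ext <;> simp [Zsqrtd.star_mk] <;> ring
  have hsq : (2 * (⟨x,y⟩:ℤ√2) - star ⟨x,y⟩)^2 = ((E^(4*(m/4)) : (ℤ√2)ˣ) : ℤ√2) := by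
    rw [key, ← hxy, sq, unit_comb]
    congr 1
    ring
  have c1 : (⟨3,2⟩ : ℤ√2) = ((E^(1:ℤ) : (ℤ√2)ˣ) : ℤ√2) := by rw [zpow_one]; rfl
  have c2 : (⟨3,2⟩ : ℤ√2)^2 = ((E^(2:ℤ) : (ℤ√2)ˣ) : ℤ√2) := by
    rw [sq, c1, unit_comb]; norm_num
  have c3 : (⟨3,2⟩ : ℤ√2)^3 = ((E^(3:ℤ) : (ℤ√2)ˣ) : ℤ√2) := by
    rw [pow_succ, c2, c1, unit_comb]; norm_num
  have hr : m % 4 = 0 ∨ m % 4 = 1 ∨ m % 4 = 2 ∨ m % 4 = 3 := by omega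
  rcases hm with hm | hm <;> rcases hr with hr | hr | hr | hr
  · exact ⟨fun i => if i = 0 then ⟨x,y⟩ else 0, by
      simp (config := {decide := true}) only [Zsqrt2.H, if_true, if_false, mul_zero, sub_zero,
        star_zero, zero_pow, add_zero, zero_add, mul_one, ne_eq, OfNat.ofNat_ne_zero,
        not_false_eq_true, reduceIte]
      rw [hsq, show 4*(m/4) = m by omega]
      exact hm.symm⟩
  · exact ⟨fun i => if i = 1 then ⟨x,y⟩ else 0, by
      simp (config := {decide := true}) only [Zsqrt2.H, if_true, if_false, mul_zero, sub_zero,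
        star_zero, zero_pow, add_zero, zero_add, mul_one, ne_eq, OfNat.ofNat_ne_zero,
        not_false_eq_true, reduceIte]
      rw [hsq, c1, unit_comb, show 1+4*(m/4) = m by omega]
      exact hm.symm⟩
  · exact ⟨fun i => if i = 2 then ⟨x,y⟩ else 0, by
      simp (config := {decide := true}) only [Zsqrt2.H, if_true, if_false, mul_zero, sub_zero,
        star_zero, zero_pow, add_zero, zero_add, mul_one, ne_eq, OfNat.ofNat_ne_zero,
        not_false_eq_true, reduceIte]
      rw [hsq, c2, unit_comb, show 2+4*(m/4) = m by omega]
      exact hm.symm⟩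
  · exact ⟨fun i => if i = 3 then ⟨x,y⟩ else 0, by
      simp (config := {decide := true}) only [Zsqrt2.H, if_true, if_false, mul_zero, sub_zero,
        star_zero, zero_pow, add_zero, zero_add, mul_one, ne_eq, OfNat.ofNat_ne_zero,
        not_false_eq_true, reduceIte]
      rw [hsq, c3, unit_comb, show 3+4*(m/4) = m by omega]
      exact hm.symm⟩
  · exact ⟨fun i => if i = 4 then ⟨x,y⟩ else 0, by
      simp (config := {decide := true}) only [Zsqrt2.H, if_true, if_false, mul_zero, sub_zero,
        star_zero, zero_pow, add_zero, zero_add, mul_one, ne_eq, OfNat.ofNat_ne_zero,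
        not_false_eq_true, reduceIte]
      rw [mul_comm, hsq, show 4*(m/4) = m by omega]
      exact hm.symm⟩
  · exact ⟨fun i => if i = 5 then ⟨x,y⟩ else 0, by
      simp (config := {decide := true}) only [Zsqrt2.H, if_true, if_false, mul_zero, sub_zero,
        star_zero, zero_pow, add_zero, zero_add, mul_one, ne_eq, OfNat.ofNat_ne_zero,
        not_false_eq_true, reduceIte]
      rw [mul_right_comm, hsq, c1, unit_comb, show 1+4*(m/4) = m by omega]
      exact hm.symm⟩
  · exact ⟨fun i => if i = 6 then ⟨x,y⟩ else 0, by
      simp (config := {decide := true}) only [Zsqrt2.H, if_true, if_false, mul_zero, sub_zero,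
        star_zero, zero_pow, add_zero, zero_add, mul_one, ne_eq, OfNat.ofNat_ne_zero,
        not_false_eq_true, reduceIte]
      rw [mul_right_comm, hsq, c2, unit_comb, show 2+4*(m/4) = m by omega]
      exact hm.symm⟩
  · exact ⟨fun i => if i = 7 then ⟨x,y⟩ else 0, by
      simp (config := {decide := true}) only [Zsqrt2.H, if_true, if_false, mul_zero, sub_zero,
        star_zero, zero_pow, add_zero, zero_add, mul_one, ne_eq, OfNat.ofNat_ne_zero,
        not_false_eq_true, reduceIte]
      rw [mul_right_comm, hsq, c3, unit_comb, show 3+4*(m/4) = m by omega]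
      exact hm.symm⟩
end

section
/- In ℤ[√2], set ε = 3 + 2√2, β = 2 + √2, g(z) = (2z − τ(z))², S(x₁,x₂,x₃,x₄) = x₁² + x₂² + x₃² + x₄², and H(z₁,…,z₈) = g(z₁) + ε·g(z₂) + ε²·g(z₃) + ε³·g(z₄) + β·g(z₅) + εβ·g(z₆) + ε²β·g(z₇) + ε³β·g(z₈). Then the generalized quadratic form G := S + H is universal over ℚ(√2): for every totally positive α ∈ ℤ[√2] there exist x₁,…,x₄, z₁,…,z₈ ∈ ℤ[√2] with S(x₁,x₂,x₃,x₄) + H(z₁,…,z₈) = α. -/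
namespace SHaux

/-- The representability predicate for the form `S + H`. -/
def RepG (γ : ℤ√2) : Prop :=
  ∃ (x : Fin 4 → ℤ√2) (z : Fin 8 → ℤ√2), (∑ i : Fin 4, (x i) ^ 2) + Zsqrt2.H z = γ

lemma mk_mul (a b c d : ℤ) : (⟨a,b⟩ * ⟨c,d⟩ : ℤ√2) = ⟨a*c+2*(b*d), a*d+b*c⟩ := by
  ext <;> simp [Zsqrtd.re_mul, Zsqrtd.im_mul] <;> ring

lemma mk_add (a b c d : ℤ) : (⟨a,b⟩ + ⟨c,d⟩ : ℤ√2) = ⟨a+c, b+d⟩ := Zsqrtd.add_def a b c d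

lemma mk_sq (a b : ℤ) : (⟨a,b⟩ : ℤ√2)^2 = ⟨a^2+2*b^2, 2*(a*b)⟩ := by
  rw [pow_two, mk_mul]; ext <;> dsimp <;> ring

lemma two_mk (a b : ℤ) : (2 : ℤ√2) * ⟨a,b⟩ = ⟨2*a, 2*b⟩ := by
  have h2 : (2 : ℤ√2) = ⟨2,0⟩ := by ext <;> simp
  rw [h2, mk_mul]; ext <;> dsimp <;> ring

lemma mk_sub (a b c d : ℤ) : (⟨a,b⟩ - ⟨c,d⟩ : ℤ√2) = ⟨a-c, b-d⟩ := by
  ext <;> simp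

lemma wval (a b : ℤ) : (2 * (⟨a,b⟩ : ℤ√2) - star ⟨a,b⟩) = ⟨a, 3*b⟩ := by
  rw [two_mk, Zsqrtd.star_mk, mk_sub]; ext <;> dsimp <;> ring

lemma e2 : (⟨3,2⟩ : ℤ√2)^2 = ⟨17,12⟩ := by rw [mk_sq]; norm_num
lemma e3 : (⟨3,2⟩ : ℤ√2)^3 = ⟨99,70⟩ := by rw [pow_succ, e2, mk_mul]; norm_num


lemma S_four (w x y z : ℤ√2) : (∑ i : Fin 4, (![w,x,y,z]) i ^ 2) = w^2+x^2+y^2+z^2 := by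
  rw [Fin.sum_univ_four]; rfl

lemma H_mk (x0 y0 x1 y1 x2 y2 x3 y3 x4 y4 x5 y5 x6 y6 x7 y7 : ℤ) :
    Zsqrt2.H ![⟨x0,y0⟩, ⟨x1,y1⟩, ⟨x2,y2⟩, ⟨x3,y3⟩, ⟨x4,y4⟩, ⟨x5,y5⟩, ⟨x6,y6⟩, ⟨x7,y7⟩] = ⟨(1*(x0^2+18*y0^2) + 0*(x0*y0)) + (3*(x1^2+18*y1^2) + 24*(x1*y1)) + (17*(x2^2+18*y2^2) + 144*(x2*y2)) + (99*(x3^2+18*y3^2) + 840*(x3*y3)) + (2*(x4^2+18*y4^2) + 12*(x4*y4)) + (10*(x5^2+18*y5^2) + 84*(x5*y5)) + (58*(x6^2+18*y6^2) + 492*(x6*y6)) + (338*(x7^2+18*y7^2) + 2868*(x7*y7)), (0*(x0^2+18*y0^2) + 6*(x0*y0)) + (2*(x1^2+18*y1^2) + 18*(x1*y1)) + (12*(x2^2+18*y2^2) + 102*(x2*y2)) + (70*(x3^2+18*y3^2) + 594*(x3*y3)) + (1*(x4^2+18*y4^2) + 12*(x4*y4)) + (7*(x5^2+18*y5^2) +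 60*(x5*y5)) + (41*(x6^2+18*y6^2) + 348*(x6*y6)) + (239*(x7^2+18*y7^2) + 2028*(x7*y7))⟩ := by
  have hexp : Zsqrt2.H ![⟨x0,y0⟩, ⟨x1,y1⟩, ⟨x2,y2⟩, ⟨x3,y3⟩, ⟨x4,y4⟩, ⟨x5,y5⟩, ⟨x6,y6⟩, ⟨x7,y7⟩] =
      (2 * (⟨x0,y0⟩:ℤ√2) - star (⟨x0,y0⟩:ℤ√2)) ^ 2
    + (⟨3, 2⟩ : ℤ√2) * (2 * (⟨x1,y1⟩:ℤ√2) - star (⟨x1,y1⟩:ℤ√2)) ^ 2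
    + (⟨3, 2⟩ : ℤ√2) ^ 2 * (2 * (⟨x2,y2⟩:ℤ√2) - star (⟨x2,y2⟩:ℤ√2)) ^ 2
    + (⟨3, 2⟩ : ℤ√2) ^ 3 * (2 * (⟨x3,y3⟩:ℤ√2) - star (⟨x3,y3⟩:ℤ√2)) ^ 2
    + (⟨2, 1⟩ : ℤ√2) * (2 * (⟨x4,y4⟩:ℤ√2) - star (⟨x4,y4⟩:ℤ√2)) ^ 2
    + (⟨3, 2⟩ : ℤ√2) * (⟨2, 1⟩ : ℤ√2) * (2 * (⟨x5,y5⟩:ℤ√2) - star (⟨x5,y5⟩:ℤ√2)) ^ 2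
    + (⟨3, 2⟩ : ℤ√2) ^ 2 * (⟨2, 1⟩ : ℤ√2) * (2 * (⟨x6,y6⟩:ℤ√2) - star (⟨x6,y6⟩:ℤ√2)) ^ 2
    + (⟨3, 2⟩ : ℤ√2) ^ 3 * (⟨2, 1⟩ : ℤ√2) * (2 * (⟨x7,y7⟩:ℤ√2) - star (⟨x7,y7⟩:ℤ√2)) ^ 2 := rfl
  rw [hexp, e2, e3]
  simp only [wval, mk_sq, mk_mul, mk_add]
  rw [Zsqrtd.ext_iff]
  constructor <;> (dsimp only; ring)

/-- full evaluation of `S + H` on explicit witnesses. -/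
lemma SH_mk (a0 b0 a1 b1 a2 b2 a3 b3 x0 y0 x1 y1 x2 y2 x3 y3 x4 y4 x5 y5 x6 y6 x7 y7 : ℤ) :
    (∑ i : Fin 4, ((![⟨a0,b0⟩, ⟨a1,b1⟩, ⟨a2,b2⟩, ⟨a3,b3⟩] : Fin 4 → ℤ√2) i) ^ 2) + Zsqrt2.H ![⟨x0,y0⟩, ⟨x1,y1⟩, ⟨x2,y2⟩, ⟨x3,y3⟩, ⟨x4,y4⟩, ⟨x5,y5⟩, ⟨x6,y6⟩, ⟨x7,y7⟩] =
      ⟨((a0^2+2*b0^2) + (a1^2+2*b1^2) + (a2^2+2*b2^2) + (a3^2+2*b3^2)) + ((1*(x0^2+18*y0^2) + 0*(x0*y0)) + (3*(x1^2+18*y1^2) + 24*(x1*y1)) + (17*(x2^2+18*y2^2) + 144*(x2*y2)) + (99*(x3^2+18*y3^2) + 840*(x3*y3)) + (2*(x4^2+18*y4^2) + 12*(x4*y4)) + (10*(x5^2+18*y5^2) + 84*(x5*y5)) + (58*(x6^2+18*y6^2) + 492*(x6*y6)) + (338*(x7^2+18*y7^2) + 2868*(x7*y7))), (2*(a0*b0)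 + 2*(a1*b1) + 2*(a2*b2) + 2*(a3*b3)) + ((0*(x0^2+18*y0^2) + 6*(x0*y0)) + (2*(x1^2+18*y1^2) + 18*(x1*y1)) + (12*(x2^2+18*y2^2) + 102*(x2*y2)) + (70*(x3^2+18*y3^2) + 594*(x3*y3)) + (1*(x4^2+18*y4^2) + 12*(x4*y4)) + (7*(x5^2+18*y5^2) + 60*(x5*y5)) + (41*(x6^2+18*y6^2) + 348*(x6*y6)) + (239*(x7^2+18*y7^2) + 2028*(x7*y7)))⟩ := by
  rw [S_four, H_mk]
  simp only [mk_sq, mk_add]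

/-- abstract builder. -/
lemma repg_of (a0 b0 a1 b1 a2 b2 a3 b3 x0 y0 x1 y1 x2 y2 x3 y3 x4 y4 x5 y5 x6 y6 x7 y7 : ℤ) {R I : ℤ}
    (hR : R = ((a0^2+2*b0^2) + (a1^2+2*b1^2) + (a2^2+2*b2^2) + (a3^2+2*b3^2)) + ((1*(x0^2+18*y0^2) + 0*(x0*y0)) + (3*(x1^2+18*y1^2) + 24*(x1*y1)) + (17*(x2^2+18*y2^2) + 144*(x2*y2)) + (99*(x3^2+18*y3^2) + 840*(x3*y3)) + (2*(x4^2+18*y4^2) + 12*(x4*y4)) + (10*(x5^2+18*y5^2) + 84*(x5*y5)) + (58*(x6^2+18*y6^2) + 492*(x6*y6)) + (338*(x7^2+18*y7^2) + 2868*(x7*y7))))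
    (hI : I = (2*(a0*b0) + 2*(a1*b1) + 2*(a2*b2) + 2*(a3*b3)) + ((0*(x0^2+18*y0^2) + 6*(x0*y0)) + (2*(x1^2+18*y1^2) + 18*(x1*y1)) + (12*(x2^2+18*y2^2) + 102*(x2*y2)) + (70*(x3^2+18*y3^2) + 594*(x3*y3)) + (1*(x4^2+18*y4^2) + 12*(x4*y4)) + (7*(x5^2+18*y5^2) + 60*(x5*y5)) + (41*(x6^2+18*y6^2) + 348*(x6*y6)) + (239*(x7^2+18*y7^2) + 2028*(x7*y7)))) :
    RepG (⟨R, I⟩ : ℤ√2) := by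
  subst hR hI
  exact ⟨![⟨a0,b0⟩, ⟨a1,b1⟩, ⟨a2,b2⟩, ⟨a3,b3⟩], ![⟨x0,y0⟩, ⟨x1,y1⟩, ⟨x2,y2⟩, ⟨x3,y3⟩, ⟨x4,y4⟩, ⟨x5,y5⟩, ⟨x6,y6⟩, ⟨x7,y7⟩], SH_mk a0 b0 a1 b1 a2 b2 a3 b3 x0 y0 x1 y1 x2 y2 x3 y3 x4 y4 x5 y5 x6 y6 x7 y7⟩


lemma cast_rep {a B R I : ℤ} (h : RepG ⟨R,I⟩) (h1 : a = R) (h2 : B = I) :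
    RepG (⟨a,B⟩ : ℤ√2) := by subst h1; subst h2; exact h

lemma lag (n : ℤ) (hn : 0 ≤ n) : ∃ p q r s : ℤ, n = p^2+q^2+r^2+s^2 := by
  obtain ⟨a,b,c,d,h⟩ := Nat.sum_four_squares n.toNat
  refine ⟨a, b, c, d, ?_⟩
  have h2 := congrArg (Nat.cast : ℕ → ℤ) h
  push_cast at h2
  omega

lemma branch_smallb (s1 s2 s3 s4 e f q : ℤ) :
    RepG ⟨s1^2+s2^2+s3^2+s4^2 + 3*e^2 + 6*f^2 + 2*q^2, 2*e^2 + 4*f^2 + q^2⟩ :=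
  repg_of s1 0 s2 0 s3 0 s4 0  0 0  e 0  0 0  (-4*f) f  q 0  0 0  0 0  0 0
    (by ring) (by ring)

lemma branch_table (b1 b2 b3 b4 s c g m q : ℤ) :
    RepG ⟨3*(b1^2+b2^2+b3^2+b4^2) + (s^2+c^2+2*g^2+9*m^2) + 2*q^2,
          2*(b1^2+b2^2+b3^2+b4^2) + q^2⟩ :=
  repg_of b1 b1 b2 b2 b3 b3 s 0  c 0  b4 0  (-4*g) g  (-21*m) (5*m)  q 0  0 0  0 0  0 0
    (by ring) (by ring)


lemma branch_atom0 (b1 b2 b3 b4 s c m1 m2 q : ℤ) :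
    RepG ⟨3*(b1^2+b2^2+b3^2+b4^2) + 9*(s^2+c^2+m1^2+m2^2) + 0 + 2*q^2,
          2*(b1^2+b2^2+b3^2+b4^2) + q^2⟩ :=
  repg_of b1 b1 b2 b2 b3 b3 (3*s) 0  (3*c) 0  b4 0  (9*m1) (-2*m1)  (-21*m2) (5*m2)  q 0
    (0) (0)  (0) (0)  (0) (0)
    (by ring) (by ring)


lemma branch_atom8 (b1 b2 b3 b4 s c m1 m2 q : ℤ) :
    RepG ⟨3*(b1^2+b2^2+b3^2+b4^2) + 9*(s^2+c^2+m1^2+m2^2) + 8 + 2*q^2,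
          2*(b1^2+b2^2+b3^2+b4^2) + q^2⟩ :=
  repg_of b1 b1 b2 b2 b3 b3 (3*s) 0  (3*c) 0  b4 0  (9*m1) (-2*m1)  (-21*m2) (5*m2)  q 0
    (-4) (1)  (-4) (1)  (0) (0)
    (by ring) (by ring)


lemma branch_atom20 (b1 b2 b3 b4 s c m1 m2 q : ℤ) :
    RepG ⟨3*(b1^2+b2^2+b3^2+b4^2) + 9*(s^2+c^2+m1^2+m2^2) + 20 + 2*q^2,
          2*(b1^2+b2^2+b3^2+b4^2) + q^2⟩ :=
  repg_of b1 b1 b2 b2 b3 b3 (3*s) 0  (3*c) 0  b4 0  (9*m1) (-2*m1)  (-21*m2) (5*m2)  q 0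
    (-5) (1)  (-13) (3)  (0) (0)
    (by ring) (by ring)


lemma branch_atom32 (b1 b2 b3 b4 s c m1 m2 q : ℤ) :
    RepG ⟨3*(b1^2+b2^2+b3^2+b4^2) + 9*(s^2+c^2+m1^2+m2^2) + 32 + 2*q^2,
          2*(b1^2+b2^2+b3^2+b4^2) + q^2⟩ :=
  repg_of b1 b1 b2 b2 b3 b3 (3*s) 0  (3*c) 0  b4 0  (9*m1) (-2*m1)  (-21*m2) (5*m2)  q 0
    (-8) (2)  (-8) (2)  (0) (0)
    (by ring) (by ring)


lemma branch_atom12 (b1 b2 b3 b4 s c m1 m2 q : ℤ) :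
    RepG ⟨3*(b1^2+b2^2+b3^2+b4^2) + 9*(s^2+c^2+m1^2+m2^2) + 12 + 2*q^2,
          2*(b1^2+b2^2+b3^2+b4^2) + q^2⟩ :=
  repg_of b1 b1 b2 b2 b3 b3 (3*s) 0  (3*c) 0  b4 0  (9*m1) (-2*m1)  (-21*m2) (5*m2)  q 0
    (-5) (1)  (0) (0)  (-17) (4)
    (by ring) (by ring)


lemma branch_atom24 (b1 b2 b3 b4 s c m1 m2 q : ℤ) :
    RepG ⟨3*(b1^2+b2^2+b3^2+b4^2) + 9*(s^2+c^2+m1^2+m2^2) + 24 + 2*q^2,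
          2*(b1^2+b2^2+b3^2+b4^2) + q^2⟩ :=
  repg_of b1 b1 b2 b2 b3 b3 (3*s) 0  (3*c) 0  b4 0  (9*m1) (-2*m1)  (-21*m2) (5*m2)  q 0
    (-4) (1)  (0) (0)  (-38) (9)
    (by ring) (by ring)


set_option maxHeartbeats 2000000 in
lemma core_even (a B b : ℤ) (hB0 : 0 ≤ B) (hle : 3*B ≤ 2*a) (hb : B = b + b) :
    RepG (⟨a,B⟩ : ℤ√2) := by
  · have hb0 : 0 ≤ b := by omega
    obtain ⟨n, hn0, hna⟩ : ∃ n : ℤ, 0 ≤ n ∧ a = 3*b + n := ⟨a - 3*b, by omega, by ring⟩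
    by_cases hb3 : b ≤ 3
    · obtain ⟨s1,s2,s3,s4,h4⟩ := lag n hn0
      interval_cases b
      · exact cast_rep (branch_smallb s1 s2 s3 s4 0 0 0) (by linarith) (by linarith)
      · exact cast_rep (branch_smallb s1 s2 s3 s4 1 0 0) (by linarith) (by linarith)
      · exact cast_rep (branch_smallb s1 s2 s3 s4 0 1 0) (by linarith) (by linarith)
      · exact cast_rep (branch_smallb s1 s2 s3 s4 1 1 0) (by linarith) (by linarith)
    · push_neg at hb3
      by_cases hn32 : n ≤ 32
      · obtain ⟨b1,b2,b3,b4,hb4⟩ := lag b hb0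
        interval_cases n
        · exact cast_rep (branch_table b1 b2 b3 b4 0 0 0 0 0) (by linarith) (by linarith)
        · exact cast_rep (branch_table b1 b2 b3 b4 1 0 0 0 0) (by linarith) (by linarith)
        · exact cast_rep (branch_table b1 b2 b3 b4 0 0 1 0 0) (by linarith) (by linarith)
        · exact cast_rep (branch_table b1 b2 b3 b4 1 0 1 0 0) (by linarith) (by linarith)
        · exact cast_rep (branch_table b1 b2 b3 b4 2 0 0 0 0) (by linarith) (by linarith)
        · exact cast_rep (branch_table b1 b2 b3 b4 2 1 0 0 0) (by linarith) (by linarith)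
        · exact cast_rep (branch_table b1 b2 b3 b4 2 0 1 0 0) (by linarith) (by linarith)
        · exact cast_rep (branch_table b1 b2 b3 b4 2 1 1 0 0) (by linarith) (by linarith)
        · exact cast_rep (branch_table b1 b2 b3 b4 0 0 2 0 0) (by linarith) (by linarith)
        · exact cast_rep (branch_table b1 b2 b3 b4 0 0 0 1 0) (by linarith) (by linarith)
        · exact cast_rep (branch_table b1 b2 b3 b4 1 0 0 1 0) (by linarith) (by linarith)
        · exact cast_rep (branch_table b1 b2 b3 b4 1 1 0 1 0) (by linarith) (by linarith)
        · exact cast_rep (branch_table b1 b2 b3 b4 1 0 1 1 0) (by linarith) (by linarith)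
        · exact cast_rep (branch_table b1 b2 b3 b4 2 0 0 1 0) (by linarith) (by linarith)
        · exact cast_rep (branch_table b1 b2 b3 b4 2 1 0 1 0) (by linarith) (by linarith)
        · exact cast_rep (branch_table b1 b2 b3 b4 2 0 1 1 0) (by linarith) (by linarith)
        · exact cast_rep (branch_table b1 b2 b3 b4 4 0 0 0 0) (by linarith) (by linarith)
        · exact cast_rep (branch_table b1 b2 b3 b4 2 2 0 1 0) (by linarith) (by linarith)
        · exact cast_rep (branch_table b1 b2 b3 b4 3 0 0 1 0) (by linarith) (by linarith)
        · exact cast_rep (branch_table b1 b2 b3 b4 3 1 0 1 0) (by linarith) (by linarith)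
        · exact cast_rep (branch_table b1 b2 b3 b4 3 0 1 1 0) (by linarith) (by linarith)
        · exact cast_rep (branch_table b1 b2 b3 b4 2 0 2 1 0) (by linarith) (by linarith)
        · exact cast_rep (branch_table b1 b2 b3 b4 2 3 0 1 0) (by linarith) (by linarith)
        · exact cast_rep (branch_table b1 b2 b3 b4 1 2 3 0 0) (by linarith) (by linarith)
        · exact cast_rep (branch_table b1 b2 b3 b4 4 0 2 0 0) (by linarith) (by linarith)
        · exact cast_rep (branch_table b1 b2 b3 b4 5 0 0 0 0) (by linarith) (by linarith)
        · exact cast_rep (branch_table b1 b2 b3 b4 5 1 0 0 0) (by linarith) (by linarith)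
        · exact cast_rep (branch_table b1 b2 b3 b4 5 0 1 0 0) (by linarith) (by linarith)
        · exact cast_rep (branch_table b1 b2 b3 b4 5 1 1 0 0) (by linarith) (by linarith)
        · exact cast_rep (branch_table b1 b2 b3 b4 2 4 0 1 0) (by linarith) (by linarith)
        · exact cast_rep (branch_table b1 b2 b3 b4 3 2 2 1 0) (by linarith) (by linarith)
        · exact cast_rep (branch_table b1 b2 b3 b4 2 4 1 1 0) (by linarith) (by linarith)
        · exact cast_rep (branch_table b1 b2 b3 b4 0 0 4 0 0) (by linarith) (by linarith)
      · push_neg at hn32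
        have h9 : n % 9 = 0 ∨ n % 9 = 1 ∨ n % 9 = 2 ∨ n % 9 = 3 ∨ n % 9 = 4 ∨ n % 9 = 5 ∨ n % 9 = 6 ∨ n % 9 = 7 ∨ n % 9 = 8 := by omega
        rcases h9 with h|h|h|h|h|h|h|h|h
        · obtain ⟨N, hN0, hNn⟩ : ∃ N : ℤ, 0 ≤ N ∧ n = 9*N + 0 := ⟨(n-0)/9, by omega, by omega⟩
          obtain ⟨c1,c2,c3,c4,hc4⟩ := lag N hN0
          obtain ⟨b1,b2,b3,b4,hb4⟩ := lag b hb0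
          exact cast_rep (branch_atom0 b1 b2 b3 b4 c1 c2 c3 c4 0) (by linarith) (by linarith)
        · obtain ⟨N, hN0, hNn⟩ : ∃ N : ℤ, 0 ≤ N ∧ n = 9*N + 10 := ⟨(n-10)/9, by omega, by omega⟩
          obtain ⟨c1,c2,c3,c4,hc4⟩ := lag N hN0
          obtain ⟨b', hb'0, hbb⟩ : ∃ w : ℤ, 0 ≤ w ∧ b = w + 2 := ⟨b-2, by omega, by omega⟩
          obtain ⟨b1,b2,b3,b4,hb4⟩ := lag b' hb'0
          exact cast_rep (branch_atom8 b1 b2 b3 b4 c1 c2 c3 c4 2) (by linarith) (by linarith)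
        · obtain ⟨N, hN0, hNn⟩ : ∃ N : ℤ, 0 ≤ N ∧ n = 9*N + 20 := ⟨(n-20)/9, by omega, by omega⟩
          obtain ⟨c1,c2,c3,c4,hc4⟩ := lag N hN0
          obtain ⟨b1,b2,b3,b4,hb4⟩ := lag b hb0
          exact cast_rep (branch_atom20 b1 b2 b3 b4 c1 c2 c3 c4 0) (by linarith) (by linarith)
        · obtain ⟨N, hN0, hNn⟩ : ∃ N : ℤ, 0 ≤ N ∧ n = 9*N + 12 := ⟨(n-12)/9, by omega, by omega⟩
          obtain ⟨c1,c2,c3,c4,hc4⟩ := lag N hN0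
          obtain ⟨b1,b2,b3,b4,hb4⟩ := lag b hb0
          exact cast_rep (branch_atom12 b1 b2 b3 b4 c1 c2 c3 c4 0) (by linarith) (by linarith)
        · obtain ⟨N, hN0, hNn⟩ : ∃ N : ℤ, 0 ≤ N ∧ n = 9*N + 22 := ⟨(n-22)/9, by omega, by omega⟩
          obtain ⟨c1,c2,c3,c4,hc4⟩ := lag N hN0
          obtain ⟨b', hb'0, hbb⟩ : ∃ w : ℤ, 0 ≤ w ∧ b = w + 2 := ⟨b-2, by omega, by omega⟩
          obtain ⟨b1,b2,b3,b4,hb4⟩ := lag b' hb'0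
          exact cast_rep (branch_atom20 b1 b2 b3 b4 c1 c2 c3 c4 2) (by linarith) (by linarith)
        · obtain ⟨N, hN0, hNn⟩ : ∃ N : ℤ, 0 ≤ N ∧ n = 9*N + 32 := ⟨(n-32)/9, by omega, by omega⟩
          obtain ⟨c1,c2,c3,c4,hc4⟩ := lag N hN0
          obtain ⟨b1,b2,b3,b4,hb4⟩ := lag b hb0
          exact cast_rep (branch_atom32 b1 b2 b3 b4 c1 c2 c3 c4 0) (by linarith) (by linarith)
        · obtain ⟨N, hN0, hNn⟩ : ∃ N : ℤ, 0 ≤ N ∧ n = 9*N + 24 := ⟨(n-24)/9, by omega, by omega⟩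
          obtain ⟨c1,c2,c3,c4,hc4⟩ := lag N hN0
          obtain ⟨b1,b2,b3,b4,hb4⟩ := lag b hb0
          exact cast_rep (branch_atom24 b1 b2 b3 b4 c1 c2 c3 c4 0) (by linarith) (by linarith)
        · obtain ⟨N, hN0, hNn⟩ : ∃ N : ℤ, 0 ≤ N ∧ n = 9*N + 34 := ⟨(n-34)/9, by omega, by omega⟩
          obtain ⟨c1,c2,c3,c4,hc4⟩ := lag N hN0
          obtain ⟨b', hb'0, hbb⟩ : ∃ w : ℤ, 0 ≤ w ∧ b = w + 2 := ⟨b-2, by omega, by omega⟩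
          obtain ⟨b1,b2,b3,b4,hb4⟩ := lag b' hb'0
          exact cast_rep (branch_atom32 b1 b2 b3 b4 c1 c2 c3 c4 2) (by linarith) (by linarith)
        · obtain ⟨N, hN0, hNn⟩ : ∃ N : ℤ, 0 ≤ N ∧ n = 9*N + 8 := ⟨(n-8)/9, by omega, by omega⟩
          obtain ⟨c1,c2,c3,c4,hc4⟩ := lag N hN0
          obtain ⟨b1,b2,b3,b4,hb4⟩ := lag b hb0
          exact cast_rep (branch_atom8 b1 b2 b3 b4 c1 c2 c3 c4 0) (by linarith) (by linarith)

set_option maxHeartbeats 2000000 in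
lemma core_odd (a B b : ℤ) (hB0 : 0 ≤ B) (hle : 3*B ≤ 2*a) (hb : B = 2*b + 1) :
    RepG (⟨a,B⟩ : ℤ√2) := by
  · have hb0 : 0 ≤ b := by omega
    obtain ⟨n, hn0, hna⟩ : ∃ n : ℤ, 0 ≤ n ∧ a = 3*b + n + 2 := ⟨a - 3*b - 2, by omega, by ring⟩
    by_cases hb3 : b ≤ 3
    · obtain ⟨s1,s2,s3,s4,h4⟩ := lag n hn0
      interval_cases b
      · exact cast_rep (branch_smallb s1 s2 s3 s4 0 0 1) (by linarith) (by linarith)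
      · exact cast_rep (branch_smallb s1 s2 s3 s4 1 0 1) (by linarith) (by linarith)
      · exact cast_rep (branch_smallb s1 s2 s3 s4 0 1 1) (by linarith) (by linarith)
      · exact cast_rep (branch_smallb s1 s2 s3 s4 1 1 1) (by linarith) (by linarith)
    · push_neg at hb3
      by_cases hn32 : n ≤ 32
      · obtain ⟨b1,b2,b3,b4,hb4⟩ := lag b hb0
        interval_cases n
        · exact cast_rep (branch_table b1 b2 b3 b4 0 0 0 0 1) (by linarith) (by linarith)
        · exact cast_rep (branch_table b1 b2 b3 b4 1 0 0 0 1) (by linarith) (by linarith)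
        · exact cast_rep (branch_table b1 b2 b3 b4 0 0 1 0 1) (by linarith) (by linarith)
        · exact cast_rep (branch_table b1 b2 b3 b4 1 0 1 0 1) (by linarith) (by linarith)
        · exact cast_rep (branch_table b1 b2 b3 b4 2 0 0 0 1) (by linarith) (by linarith)
        · exact cast_rep (branch_table b1 b2 b3 b4 2 1 0 0 1) (by linarith) (by linarith)
        · exact cast_rep (branch_table b1 b2 b3 b4 2 0 1 0 1) (by linarith) (by linarith)
        · exact cast_rep (branch_table b1 b2 b3 b4 2 1 1 0 1) (by linarith) (by linarith)
        · exact cast_rep (branch_table b1 b2 b3 b4 0 0 2 0 1) (by linarith) (by linarith)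
        · exact cast_rep (branch_table b1 b2 b3 b4 0 0 0 1 1) (by linarith) (by linarith)
        · exact cast_rep (branch_table b1 b2 b3 b4 1 0 0 1 1) (by linarith) (by linarith)
        · exact cast_rep (branch_table b1 b2 b3 b4 1 1 0 1 1) (by linarith) (by linarith)
        · exact cast_rep (branch_table b1 b2 b3 b4 1 0 1 1 1) (by linarith) (by linarith)
        · exact cast_rep (branch_table b1 b2 b3 b4 2 0 0 1 1) (by linarith) (by linarith)
        · exact cast_rep (branch_table b1 b2 b3 b4 2 1 0 1 1) (by linarith) (by linarith)
        · exact cast_rep (branch_table b1 b2 b3 b4 2 0 1 1 1) (by linarith) (by linarith)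
        · exact cast_rep (branch_table b1 b2 b3 b4 4 0 0 0 1) (by linarith) (by linarith)
        · exact cast_rep (branch_table b1 b2 b3 b4 2 2 0 1 1) (by linarith) (by linarith)
        · exact cast_rep (branch_table b1 b2 b3 b4 3 0 0 1 1) (by linarith) (by linarith)
        · exact cast_rep (branch_table b1 b2 b3 b4 3 1 0 1 1) (by linarith) (by linarith)
        · exact cast_rep (branch_table b1 b2 b3 b4 3 0 1 1 1) (by linarith) (by linarith)
        · exact cast_rep (branch_table b1 b2 b3 b4 2 0 2 1 1) (by linarith) (by linarith)
        · exact cast_rep (branch_table b1 b2 b3 b4 2 3 0 1 1) (by linarith) (by linarith)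
        · exact cast_rep (branch_table b1 b2 b3 b4 1 2 3 0 1) (by linarith) (by linarith)
        · exact cast_rep (branch_table b1 b2 b3 b4 4 0 2 0 1) (by linarith) (by linarith)
        · exact cast_rep (branch_table b1 b2 b3 b4 5 0 0 0 1) (by linarith) (by linarith)
        · exact cast_rep (branch_table b1 b2 b3 b4 5 1 0 0 1) (by linarith) (by linarith)
        · exact cast_rep (branch_table b1 b2 b3 b4 5 0 1 0 1) (by linarith) (by linarith)
        · exact cast_rep (branch_table b1 b2 b3 b4 5 1 1 0 1) (by linarith) (by linarith)
        · exact cast_rep (branch_table b1 b2 b3 b4 2 4 0 1 1) (by linarith) (by linarith)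
        · exact cast_rep (branch_table b1 b2 b3 b4 3 2 2 1 1) (by linarith) (by linarith)
        · exact cast_rep (branch_table b1 b2 b3 b4 2 4 1 1 1) (by linarith) (by linarith)
        · exact cast_rep (branch_table b1 b2 b3 b4 0 0 4 0 1) (by linarith) (by linarith)
      · push_neg at hn32
        have h9 : n % 9 = 0 ∨ n % 9 = 1 ∨ n % 9 = 2 ∨ n % 9 = 3 ∨ n % 9 = 4 ∨ n % 9 = 5 ∨ n % 9 = 6 ∨ n % 9 = 7 ∨ n % 9 = 8 := by omega
        rcases h9 with h|h|h|h|h|h|h|h|h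
        · obtain ⟨N, hN0, hNn⟩ : ∃ N : ℤ, 0 ≤ N ∧ n = 9*N + 0 := ⟨(n-0)/9, by omega, by omega⟩
          obtain ⟨c1,c2,c3,c4,hc4⟩ := lag N hN0
          obtain ⟨b1,b2,b3,b4,hb4⟩ := lag b hb0
          exact cast_rep (branch_atom0 b1 b2 b3 b4 c1 c2 c3 c4 1) (by linarith) (by linarith)
        · obtain ⟨N, hN0, hNn⟩ : ∃ N : ℤ, 0 ≤ N ∧ n = 9*N + 28 := ⟨(n-28)/9, by omega, by omega⟩
          obtain ⟨c1,c2,c3,c4,hc4⟩ := lag N hN0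
          obtain ⟨b', hb'0, hbb⟩ : ∃ w : ℤ, 0 ≤ w ∧ b = w + 4 := ⟨b-4, by omega, by omega⟩
          obtain ⟨b1,b2,b3,b4,hb4⟩ := lag b' hb'0
          exact cast_rep (branch_atom24 b1 b2 b3 b4 c1 c2 c3 c4 3) (by linarith) (by linarith)
        · obtain ⟨N, hN0, hNn⟩ : ∃ N : ℤ, 0 ≤ N ∧ n = 9*N + 20 := ⟨(n-20)/9, by omega, by omega⟩
          obtain ⟨c1,c2,c3,c4,hc4⟩ := lag N hN0
          obtain ⟨b1,b2,b3,b4,hb4⟩ := lag b hb0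
          exact cast_rep (branch_atom20 b1 b2 b3 b4 c1 c2 c3 c4 1) (by linarith) (by linarith)
        · obtain ⟨N, hN0, hNn⟩ : ∃ N : ℤ, 0 ≤ N ∧ n = 9*N + 12 := ⟨(n-12)/9, by omega, by omega⟩
          obtain ⟨c1,c2,c3,c4,hc4⟩ := lag N hN0
          obtain ⟨b1,b2,b3,b4,hb4⟩ := lag b hb0
          exact cast_rep (branch_atom12 b1 b2 b3 b4 c1 c2 c3 c4 1) (by linarith) (by linarith)
        · obtain ⟨N, hN0, hNn⟩ : ∃ N : ℤ, 0 ≤ N ∧ n = 9*N + 4 := ⟨(n-4)/9, by omega, by omega⟩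
          obtain ⟨c1,c2,c3,c4,hc4⟩ := lag N hN0
          obtain ⟨b', hb'0, hbb⟩ : ∃ w : ℤ, 0 ≤ w ∧ b = w + 4 := ⟨b-4, by omega, by omega⟩
          obtain ⟨b1,b2,b3,b4,hb4⟩ := lag b' hb'0
          exact cast_rep (branch_atom0 b1 b2 b3 b4 c1 c2 c3 c4 3) (by linarith) (by linarith)
        · obtain ⟨N, hN0, hNn⟩ : ∃ N : ℤ, 0 ≤ N ∧ n = 9*N + 32 := ⟨(n-32)/9, by omega, by omega⟩
          obtain ⟨c1,c2,c3,c4,hc4⟩ := lag N hN0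
          obtain ⟨b1,b2,b3,b4,hb4⟩ := lag b hb0
          exact cast_rep (branch_atom32 b1 b2 b3 b4 c1 c2 c3 c4 1) (by linarith) (by linarith)
        · obtain ⟨N, hN0, hNn⟩ : ∃ N : ℤ, 0 ≤ N ∧ n = 9*N + 24 := ⟨(n-24)/9, by omega, by omega⟩
          obtain ⟨c1,c2,c3,c4,hc4⟩ := lag N hN0
          obtain ⟨b1,b2,b3,b4,hb4⟩ := lag b hb0
          exact cast_rep (branch_atom24 b1 b2 b3 b4 c1 c2 c3 c4 1) (by linarith) (by linarith)
        · obtain ⟨N, hN0, hNn⟩ : ∃ N : ℤ, 0 ≤ N ∧ n = 9*N + 16 := ⟨(n-16)/9, by omega, by omega⟩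
          obtain ⟨c1,c2,c3,c4,hc4⟩ := lag N hN0
          obtain ⟨b', hb'0, hbb⟩ : ∃ w : ℤ, 0 ≤ w ∧ b = w + 4 := ⟨b-4, by omega, by omega⟩
          obtain ⟨b1,b2,b3,b4,hb4⟩ := lag b' hb'0
          exact cast_rep (branch_atom12 b1 b2 b3 b4 c1 c2 c3 c4 3) (by linarith) (by linarith)
        · obtain ⟨N, hN0, hNn⟩ : ∃ N : ℤ, 0 ≤ N ∧ n = 9*N + 8 := ⟨(n-8)/9, by omega, by omega⟩
          obtain ⟨c1,c2,c3,c4,hc4⟩ := lag N hN0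
          obtain ⟨b1,b2,b3,b4,hb4⟩ := lag b hb0
          exact cast_rep (branch_atom8 b1 b2 b3 b4 c1 c2 c3 c4 1) (by linarith) (by linarith)


lemma core (a B : ℤ) (hB0 : 0 ≤ B) (hle : 3*B ≤ 2*a) : RepG (⟨a,B⟩ : ℤ√2) := by
  rcases Int.even_or_odd B with ⟨b, hb⟩ | ⟨b, hb⟩
  · exact core_even a B b hB0 hle hb
  · exact core_odd a B b hB0 hle hb


lemma repg_elim {γ : ℤ√2} (h : RepG γ) :
    ∃ a0 b0 a1 b1 a2 b2 a3 b3 x0 y0 x1 y1 x2 y2 x3 y3 x4 y4 x5 y5 x6 y6 x7 y7 : ℤ,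
      γ.re = ((a0^2+2*b0^2) + (a1^2+2*b1^2) + (a2^2+2*b2^2) + (a3^2+2*b3^2)) + ((1*(x0^2+18*y0^2) + 0*(x0*y0)) + (3*(x1^2+18*y1^2) + 24*(x1*y1)) + (17*(x2^2+18*y2^2) + 144*(x2*y2)) + (99*(x3^2+18*y3^2) + 840*(x3*y3)) + (2*(x4^2+18*y4^2) + 12*(x4*y4)) + (10*(x5^2+18*y5^2) + 84*(x5*y5)) + (58*(x6^2+18*y6^2) + 492*(x6*y6)) + (338*(x7^2+18*y7^2) + 2868*(x7*y7))) ∧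
      γ.im = (2*(a0*b0) + 2*(a1*b1) + 2*(a2*b2) + 2*(a3*b3)) + ((0*(x0^2+18*y0^2) + 6*(x0*y0)) + (2*(x1^2+18*y1^2) + 18*(x1*y1)) + (12*(x2^2+18*y2^2) + 102*(x2*y2)) + (70*(x3^2+18*y3^2) + 594*(x3*y3)) + (1*(x4^2+18*y4^2) + 12*(x4*y4)) + (7*(x5^2+18*y5^2) + 60*(x5*y5)) + (41*(x6^2+18*y6^2) + 348*(x6*y6)) + (239*(x7^2+18*y7^2) + 2028*(x7*y7))) := by
  obtain ⟨x, z, h⟩ := h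
  have hx : x = ![⟨(x 0).re,(x 0).im⟩, ⟨(x 1).re,(x 1).im⟩, ⟨(x 2).re,(x 2).im⟩,
      ⟨(x 3).re,(x 3).im⟩] := by
    funext i; fin_cases i <;> rfl
  have hz : z = ![⟨(z 0).re,(z 0).im⟩, ⟨(z 1).re,(z 1).im⟩, ⟨(z 2).re,(z 2).im⟩,
      ⟨(z 3).re,(z 3).im⟩, ⟨(z 4).re,(z 4).im⟩, ⟨(z 5).re,(z 5).im⟩, ⟨(z 6).re,(z 6).im⟩,
      ⟨(z 7).re,(z 7).im⟩] := by
    funext i; fin_cases i <;> rfl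
  rw [hx, hz, SH_mk, Zsqrtd.ext_iff] at h
  exact ⟨(x 0).re, (x 0).im, (x 1).re, (x 1).im, (x 2).re, (x 2).im, (x 3).re, (x 3).im,
    (z 0).re, (z 0).im, (z 1).re, (z 1).im, (z 2).re, (z 2).im, (z 3).re, (z 3).im,
    (z 4).re, (z 4).im, (z 5).re, (z 5).im, (z 6).re, (z 6).im, (z 7).re, (z 7).im,
    h.1.symm, h.2.symm⟩

lemma repg_star {γ : ℤ√2} (h : RepG γ) : RepG (star γ) := by
  obtain ⟨a0, b0, a1, b1, a2, b2, a3, b3, x0, y0, x1, y1, x2, y2, x3, y3, x4, y4, x5, y5, x6, y6, x7, y7, hre, him⟩ := repg_elim h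
  have hs : star γ = (⟨γ.re, -γ.im⟩ : ℤ√2) := by
    ext <;> simp [Zsqrtd.re_star, Zsqrtd.im_star]
  rw [hs]
  exact repg_of a0 (-b0) a1 (-b1) a2 (-b2) a3 (-b3) x0 (-y0) (17*x3+72*y3) (-4*x3-17*y3) (17*x2+72*y2) (-4*x2-17*y2) (17*x1+72*y1) (-4*x1-17*y1) (17*x7+72*y7) (-4*x7-17*y7) (17*x6+72*y6) (-4*x6-17*y6) (17*x5+72*y5) (-4*x5-17*y5) (17*x4+72*y4) (-4*x4-17*y4)
    (by linear_combination hre) (by linear_combination (-1 : ℤ) * him)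

lemma repg_eps {γ : ℤ√2} (h : RepG γ) : RepG ((⟨17,12⟩ : ℤ√2) * γ) := by
  obtain ⟨a0, b0, a1, b1, a2, b2, a3, b3, x0, y0, x1, y1, x2, y2, x3, y3, x4, y4, x5, y5, x6, y6, x7, y7, hre, him⟩ := repg_elim h
  have hs : (⟨17,12⟩ : ℤ√2) * γ = (⟨17*γ.re + 24*γ.im, 12*γ.re + 17*γ.im⟩ : ℤ√2) := by
    ext <;> simp [Zsqrtd.re_mul, Zsqrtd.im_mul] <;> ring
  rw [hs]
  exact repg_of (3*a0+4*b0) (2*a0+3*b0) (3*a1+4*b1) (2*a1+3*b1) (3*a2+4*b2) (2*a2+3*b2) (3*a3+4*b3) (2*a3+3*b3) (17*x2+72*y2) (4*x2+17*y2) (17*x3+72*y3) (4*x3+17*y3) x0 y0 x1 y1 (17*x6+72*y6) (4*x6+17*y6) (17*x7+72*y7) (4*x7+17*y7) x4 y4 x5 y5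
    (by linear_combination (17:ℤ) * hre + 24 * him) (by linear_combination (12:ℤ) * hre + 17 * him)


lemma tp_int {α : ℤ√2} (h : Zsqrt2.TotPos α) : 0 < α.re ∧ 2*α.im^2 < α.re^2 := by
  obtain ⟨h1, h2⟩ := h
  have hs : Real.sqrt 2 ^ 2 = 2 := Real.sq_sqrt (by norm_num)
  have hs0 : 0 < Real.sqrt 2 := Real.sqrt_pos.mpr (by norm_num)
  have hre : (0:ℝ) < (α.re : ℝ) := by nlinarith
  have hni : 2*(α.im:ℝ)^2 < (α.re:ℝ)^2 := by nlinarith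
  constructor
  · exact_mod_cast hre
  · exact_mod_cast hni

lemma rep_all : ∀ (N : ℕ) (γ : ℤ√2), γ.re ≤ N → 0 < γ.re → 2*γ.im^2 < γ.re^2 → RepG γ := by
  intro N
  induction N using Nat.strong_induction_on with
  | _ N IH =>
    intro γ hN hpos hsq
    have key : ∀ δ : ℤ√2, δ.re = γ.re → 0 ≤ δ.im → 2*δ.im^2 < δ.re^2 → RepG δ := by
      intro δ hre0 him0 hsqd
      have hposd : 0 < δ.re := hre0 ▸ hpos
      by_cases h3 : 3*δ.im ≤ 2*δ.re
      · exact core δ.re δ.im him0 h3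
      · push_neg at h3
        set a := δ.re with ha
        set B := δ.im with hB
        have hδ : δ = (⟨17,12⟩ : ℤ√2) * ⟨17*a - 24*B, 17*B - 12*a⟩ := by
          ext <;> simp [Zsqrtd.re_mul, Zsqrtd.im_mul] <;> ring
        have hsq24 : (24*B)^2 < (17*a)^2 := by nlinarith
        have h1 : 0 < 17*a - 24*B := by nlinarith
        have hid : (17*a - 24*B)^2 - 2*(17*B - 12*a)^2 = a^2 - 2*B^2 := by ring
        have h2 : 2*(17*B - 12*a)^2 < (17*a - 24*B)^2 := by
          have : 2*B^2 < a^2 := hsqd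
          linarith
        have hlt : 17*a - 24*B < a := by linarith
        have hrec : RepG (⟨17*a - 24*B, 17*B - 12*a⟩ : ℤ√2) := by
          refine IH (17*a - 24*B).toNat (by omega) _ (Int.self_le_toNat _) h1 h2
        rw [hδ]
        exact repg_eps hrec
    rcases le_or_gt 0 γ.im with hs | hs
    · exact key γ rfl hs hsq
    · have h1 : RepG (star γ) := by
        refine key (star γ) (Zsqrtd.re_star γ) ?_ ?_
        · rw [Zsqrtd.im_star]; omega
        · rw [Zsqrtd.im_star, Zsqrtd.re_star]
          nlinarith
      have h2 := repg_star h1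
      rwa [star_star] at h2

end SHaux

/-- **Section 4, main claim of the counterexample.** With
`S(x₁,x₂,x₃,x₄) = x₁² + x₂² + x₃² + x₄²`, the generalized quadratic form `G := S + H` is
universal over `ℚ(√2)`: every totally positive `α ∈ ℤ[√2]` can be written as
`S(x₁,…,x₄) + H(z₁,…,z₈) = α` with `x₁,…,x₄, z₁,…,z₈ ∈ ℤ[√2]`. -/
theorem S_plus_H_universal (α : ℤ√2) (hα : Zsqrt2.TotPos α) :
    ∃ (x : Fin 4 → ℤ√2) (z : Fin 8 → ℤ√2),
      (∑ i : Fin 4, (x i) ^ 2) + Zsqrt2.H z = α := by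
  obtain ⟨hpos, hsq⟩ := SHaux.tp_int hα
  exact SHaux.rep_all α.re.toNat α (by omega) hpos hsq
end
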